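/- arXiv:2309.08676 — 5 statements merged into one kernel-verified Lean document; each statement's English description precedes it below -/
import Mathlib

section
/- Let P₁, P₂ be commuting Hermitian Pauli observables and Λ(P₁,P₂) = (I+P₁)/2 + ((I−P₁)/2)P₂. Then for any Pauli unitary Q, Λ(P₁,P₂) Q Λ(P₁,P₂) = P₁^{[P₂,Q]} Q P₂^{[P₁,Q]}, where exponents are commutator bits in F_2 and an operator to the power 0 is the identity. -/
open Matrix
open scoped Classical

noncomputable section

/-- Operators on `n` qubits, as matrices indexed by computational basis states. -/
abbrev QOp (n : ℕ) : Type := Matrix (Fin n → Fin 2) (Fin n → Fin 2) ℂ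

/-- The single-qubit Pauli matrices `I, X, Y, Z`. -/
def sigma1 (t : Fin 4) : Matrix (Fin 2) (Fin 2) ℂ :=
  if t = 0 then 1
  else if t = 1 then !![0, 1; 1, 0]
  else if t = 2 then !![0, -Complex.I; Complex.I, 0]
  else !![1, 0; 0, -1]

/-- Tensor product of single-qubit Pauli matrices, as an `n`-qubit operator. -/
def pauliTensor (n : ℕ) (a : Fin n → Fin 4) : QOp n :=
  Matrix.of fun i j => ∏ k, sigma1 (a k) (i k) (j k)

/-- `P` is an `n`-qubit Pauli unitary: `i^s` times a tensor product of `I,X,Y,Z`. -/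
def IsPauli {n : ℕ} (P : QOp n) : Prop :=
  ∃ (s : Fin 4) (a : Fin n → Fin 4), P = Complex.I ^ (s : ℕ) • pauliTensor n a

/-- The `F₂` commutator bit: `0` if the operators commute, `1` otherwise. -/
def commBit {n : ℕ} (P Q : QOp n) : ZMod 2 := if P * Q = Q * P then 0 else 1

/-- The controlled-Pauli operator `Λ(P₁,P₂) = (I+P₁)/2 + ((I−P₁)/2)·P₂`. -/
def ctrlPauli {n : ℕ} (P₁ P₂ : QOp n) : QOp n :=
  (2 : ℂ)⁻¹ • (1 + P₁) + ((2 : ℂ)⁻¹ • (1 - P₁)) * P₂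

set_option linter.unreachableTactic false
set_option linter.unusedTactic false

/-- Two single-qubit Paulis either commute or anticommute. -/
lemma sigma_dich (t u : Fin 4) : sigma1 t * sigma1 u = sigma1 u * sigma1 t ∨
    sigma1 t * sigma1 u = -(sigma1 u * sigma1 t) := by
  fin_cases t <;> fin_cases u <;>
    first
      | (left; ext i j; fin_cases i <;> fin_cases j <;>
          simp [sigma1, Matrix.mul_apply, Fin.sum_univ_two] <;> ring1)
      | (right; ext i j; fin_cases i <;> fin_cases j <;>
          simp [sigma1, Matrix.mul_apply, Fin.sum_univ_two] <;> ring1)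

/-- Products of Pauli tensors multiply factorwise. -/
lemma pauliTensor_mul (n : ℕ) (a b : Fin n → Fin 4) :
    pauliTensor n a * pauliTensor n b
      = Matrix.of fun i j => ∏ k, (sigma1 (a k) * sigma1 (b k)) (i k) (j k) := by
  ext i j
  simp only [pauliTensor, Matrix.mul_apply, Matrix.of_apply]
  rw [Finset.prod_univ_sum, Fintype.piFinset_univ]
  exact Finset.sum_congr rfl fun x _ => (Finset.prod_mul_distrib).symm

/-- Two Pauli tensors either commute or anticommute. -/
lemma pauliTensor_dich (n : ℕ) (a b : Fin n → Fin 4) :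
    pauliTensor n a * pauliTensor n b = pauliTensor n b * pauliTensor n a ∨
    pauliTensor n a * pauliTensor n b = -(pauliTensor n b * pauliTensor n a) := by
  set f : Fin n → ℂ := fun k =>
    if sigma1 (a k) * sigma1 (b k) = sigma1 (b k) * sigma1 (a k) then 1 else -1 with hf
  have hfk : ∀ k, sigma1 (a k) * sigma1 (b k) = f k • (sigma1 (b k) * sigma1 (a k)) := by
    intro k
    by_cases h : sigma1 (a k) * sigma1 (b k) = sigma1 (b k) * sigma1 (a k)
    · simp [hf, h]
    · rcases sigma_dich (a k) (b k) with h' | h'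
      · exact absurd h' h
      · rw [h']; simp only [hf]; rw [if_neg h, neg_smul, one_smul]
  have hprod : pauliTensor n a * pauliTensor n b
      = (∏ k, f k) • (pauliTensor n b * pauliTensor n a) := by
    rw [pauliTensor_mul, pauliTensor_mul]
    ext i j
    simp only [Matrix.of_apply, Matrix.smul_apply, smul_eq_mul]
    rw [Finset.prod_congr rfl (fun k _ => by rw [hfk k, Matrix.smul_apply, smul_eq_mul])]
    exact Finset.prod_mul_distrib
  have hpm : (∏ k, f k) = 1 ∨ (∏ k, f k) = -1 := by
    refine Finset.prod_induction f (fun x => x = 1 ∨ x = -1) ?_ (Or.inl rfl) ?_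
    · rintro x y (rfl | rfl) (rfl | rfl) <;> norm_num
    · intro k _
      by_cases h : sigma1 (a k) * sigma1 (b k) = sigma1 (b k) * sigma1 (a k) <;> simp [hf, h]
  rcases hpm with h | h <;> rw [hprod, h]
  · simp
  · right; simp

/-- Two Pauli unitaries either commute or anticommute. -/
lemma pauli_dich {n : ℕ} (P Q : QOp n) (hP : IsPauli P) (hQ : IsPauli Q) :
    P * Q = Q * P ∨ P * Q = -(Q * P) := by
  obtain ⟨s, a, rfl⟩ := hP
  obtain ⟨r, b, rfl⟩ := hQ
  rcases pauliTensor_dich n a b with h | h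
  · left
    simp only [Matrix.smul_mul, Matrix.mul_smul, smul_smul]
    rw [h, mul_comm]
  · right
    simp only [Matrix.smul_mul, Matrix.mul_smul, smul_smul]
    rw [h, mul_comm, smul_neg]

section Cases
variable {n : ℕ} (P₁ P₂ Q : QOp n)

lemma caseCC (h1sq : P₁ * P₁ = 1) (h2sq : P₂ * P₂ = 1) (hcomm : P₁ * P₂ = P₂ * P₁)
    (c1 : P₁ * Q = Q * P₁) (c2 : P₂ * Q = Q * P₂) :
    ctrlPauli P₁ P₂ * Q * ctrlPauli P₁ P₂ = Q := by
  have A1 : ∀ X : QOp n, P₁ * (P₁ * X) = X := fun X => by rw [← mul_assoc, h1sq, one_mul]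
  have A2 : ∀ X : QOp n, P₂ * (P₂ * X) = X := fun X => by rw [← mul_assoc, h2sq, one_mul]
  have S0 : P₂ * P₁ = P₁ * P₂ := hcomm.symm
  have S : ∀ X : QOp n, P₂ * (P₁ * X) = P₁ * (P₂ * X) := fun X => by
    rw [← mul_assoc, S0, mul_assoc]
  have C1 : ∀ X : QOp n, P₁ * (Q * X) = Q * (P₁ * X) := fun X => by
    rw [← mul_assoc, c1, mul_assoc]
  have C2 : ∀ X : QOp n, P₂ * (Q * X) = Q * (P₂ * X) := fun X => by
    rw [← mul_assoc, c2, mul_assoc]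
  simp only [ctrlPauli, Matrix.smul_mul, Matrix.mul_smul, add_mul, mul_add, sub_mul, mul_sub,
    one_mul, mul_one, mul_assoc, smul_add, smul_sub, smul_smul, mul_neg, neg_mul, smul_neg,
    A1, A2, S0, S, c1, c2, C1, C2, h1sq, h2sq]
  module

lemma caseAC (h1sq : P₁ * P₁ = 1) (h2sq : P₂ * P₂ = 1) (hcomm : P₁ * P₂ = P₂ * P₁)
    (c1 : P₁ * Q = -(Q * P₁)) (c2 : P₂ * Q = Q * P₂) :
    ctrlPauli P₁ P₂ * Q * ctrlPauli P₁ P₂ = Q * P₂ := by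
  have A1 : ∀ X : QOp n, P₁ * (P₁ * X) = X := fun X => by rw [← mul_assoc, h1sq, one_mul]
  have A2 : ∀ X : QOp n, P₂ * (P₂ * X) = X := fun X => by rw [← mul_assoc, h2sq, one_mul]
  have S0 : P₂ * P₁ = P₁ * P₂ := hcomm.symm
  have S : ∀ X : QOp n, P₂ * (P₁ * X) = P₁ * (P₂ * X) := fun X => by
    rw [← mul_assoc, S0, mul_assoc]
  have C1 : ∀ X : QOp n, P₁ * (Q * X) = -(Q * (P₁ * X)) := fun X => by
    rw [← mul_assoc, c1, neg_mul, mul_assoc]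
  have C2 : ∀ X : QOp n, P₂ * (Q * X) = Q * (P₂ * X) := fun X => by
    rw [← mul_assoc, c2, mul_assoc]
  simp only [ctrlPauli, Matrix.smul_mul, Matrix.mul_smul, add_mul, mul_add, sub_mul, mul_sub,
    one_mul, mul_one, mul_assoc, smul_add, smul_sub, smul_smul, mul_neg, neg_mul, smul_neg,
    neg_neg, A1, A2, S0, S, c1, c2, C1, C2, h1sq, h2sq]
  module

lemma caseCA (h1sq : P₁ * P₁ = 1) (h2sq : P₂ * P₂ = 1) (hcomm : P₁ * P₂ = P₂ * P₁)
    (c1 : P₁ * Q = Q * P₁) (c2 : P₂ * Q = -(Q * P₂)) :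
    ctrlPauli P₁ P₂ * Q * ctrlPauli P₁ P₂ = P₁ * Q := by
  have A1 : ∀ X : QOp n, P₁ * (P₁ * X) = X := fun X => by rw [← mul_assoc, h1sq, one_mul]
  have A2 : ∀ X : QOp n, P₂ * (P₂ * X) = X := fun X => by rw [← mul_assoc, h2sq, one_mul]
  have S0 : P₂ * P₁ = P₁ * P₂ := hcomm.symm
  have S : ∀ X : QOp n, P₂ * (P₁ * X) = P₁ * (P₂ * X) := fun X => by
    rw [← mul_assoc, S0, mul_assoc]
  have C1 : ∀ X : QOp n, P₁ * (Q * X) = Q * (P₁ * X) := fun X => by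
    rw [← mul_assoc, c1, mul_assoc]
  have C2 : ∀ X : QOp n, P₂ * (Q * X) = -(Q * (P₂ * X)) := fun X => by
    rw [← mul_assoc, c2, neg_mul, mul_assoc]
  rw [c1]
  simp only [ctrlPauli, Matrix.smul_mul, Matrix.mul_smul, add_mul, mul_add, sub_mul, mul_sub,
    one_mul, mul_one, mul_assoc, smul_add, smul_sub, smul_smul, mul_neg, neg_mul, smul_neg,
    neg_neg, A1, A2, S0, S, c1, c2, C1, C2, h1sq, h2sq]
  module

lemma caseAA (h1sq : P₁ * P₁ = 1) (h2sq : P₂ * P₂ = 1) (hcomm : P₁ * P₂ = P₂ * P₁)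
    (c1 : P₁ * Q = -(Q * P₁)) (c2 : P₂ * Q = -(Q * P₂)) :
    ctrlPauli P₁ P₂ * Q * ctrlPauli P₁ P₂ = P₁ * Q * P₂ := by
  have A1 : ∀ X : QOp n, P₁ * (P₁ * X) = X := fun X => by rw [← mul_assoc, h1sq, one_mul]
  have A2 : ∀ X : QOp n, P₂ * (P₂ * X) = X := fun X => by rw [← mul_assoc, h2sq, one_mul]
  have S0 : P₂ * P₁ = P₁ * P₂ := hcomm.symm
  have S : ∀ X : QOp n, P₂ * (P₁ * X) = P₁ * (P₂ * X) := fun X => by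
    rw [← mul_assoc, S0, mul_assoc]
  have C1 : ∀ X : QOp n, P₁ * (Q * X) = -(Q * (P₁ * X)) := fun X => by
    rw [← mul_assoc, c1, neg_mul, mul_assoc]
  have C2 : ∀ X : QOp n, P₂ * (Q * X) = -(Q * (P₂ * X)) := fun X => by
    rw [← mul_assoc, c2, neg_mul, mul_assoc]
  have hr : P₁ * Q * P₂ = -(Q * (P₁ * P₂)) := by rw [c1, neg_mul, mul_assoc]
  rw [hr]
  simp only [ctrlPauli, Matrix.smul_mul, Matrix.mul_smul, add_mul, mul_add, sub_mul, mul_sub,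
    one_mul, mul_one, mul_assoc, smul_add, smul_sub, smul_smul, mul_neg, neg_mul, smul_neg,
    neg_neg, A1, A2, S0, S, c1, c2, C1, C2, h1sq, h2sq]
  module

end Cases

/-- Conjugation of a Pauli unitary `Q` by the controlled-Pauli:
`Λ(P₁,P₂) Q Λ(P₁,P₂) = P₁^{[P₂,Q]} Q P₂^{[P₁,Q]}`. -/
theorem ctrlPauli_conj (n : ℕ) (P₁ P₂ Q : QOp n)
    (h1 : IsPauli P₁) (h2 : IsPauli P₂) (hQ : IsPauli Q)
    (h1h : P₁ᴴ = P₁) (h2h : P₂ᴴ = P₂)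
    (h1sq : P₁ * P₁ = 1) (h2sq : P₂ * P₂ = 1)
    (hcomm : P₁ * P₂ = P₂ * P₁) :
    ctrlPauli P₁ P₂ * Q * ctrlPauli P₁ P₂
      = P₁ ^ (commBit P₂ Q).val * Q * P₂ ^ (commBit P₁ Q).val := by
  have e0 : ((0 : ZMod 2)).val = 0 := rfl
  have e1 : ((1 : ZMod 2)).val = 1 := rfl
  by_cases hc1 : P₁ * Q = Q * P₁ <;> by_cases hc2 : P₂ * Q = Q * P₂
  · rw [commBit, commBit, if_pos hc1, if_pos hc2, e0, pow_zero, pow_zero, one_mul, mul_one]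
    exact caseCC P₁ P₂ Q h1sq h2sq hcomm hc1 hc2
  · rw [commBit, commBit, if_pos hc1, if_neg hc2, e0, e1, pow_zero, pow_one, mul_one]
    have c2 : P₂ * Q = -(Q * P₂) := (pauli_dich P₂ Q h2 hQ).resolve_left hc2
    exact caseCA P₁ P₂ Q h1sq h2sq hcomm hc1 c2
  · rw [commBit, commBit, if_neg hc1, if_pos hc2, e0, e1, pow_zero, pow_one, one_mul]
    have c1 : P₁ * Q = -(Q * P₁) := (pauli_dich P₁ Q h1 hQ).resolve_left hc1
    exact caseAC P₁ P₂ Q h1sq h2sq hcomm c1 hc2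
  · rw [commBit, commBit, if_neg hc1, if_neg hc2, e1, pow_one, pow_one]
    have c1 : P₁ * Q = -(Q * P₁) := (pauli_dich P₁ Q h1 hQ).resolve_left hc1
    have c2 : P₂ * Q = -(Q * P₂) := (pauli_dich P₂ Q h2 hQ).resolve_left hc2
    exact caseAA P₁ P₂ Q h1sq h2sq hcomm c1 c2
end
end

section
/- Let P₁, ..., P_{2m} be Pauli unitaries such that the 2m×2m matrix B over F_2 with B_{ij} = [P_i, P_j] is invertible. Then there exists an invertible 2m×2m matrix F over F_2 such that the Pauli operators Q_j = P₁^{F_{j,1}} ··· P_{2m}^{F_{j,2m}} (j = 1,...,2m) form a symplectic basis, i.e., have the same pairwise commutation relations as X₁, Z₁, ..., X_m, Z_m. -/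
open Matrix
open scoped Classical

noncomputable section

def eps (s t : Fin 4) : ℕ := if s = 0 ∨ t = 0 ∨ s = t then 0 else 1

lemma sigma1_sq (t : Fin 4) : sigma1 t * sigma1 t = 1 := by
  fin_cases t <;>
  · ext i j
    fin_cases i <;> fin_cases j <;>
      simp [sigma1, Matrix.mul_apply, Fin.sum_univ_two, Matrix.one_apply]

lemma sigma1_comm (s t : Fin 4) :
    sigma1 s * sigma1 t = ((-1 : ℂ) ^ eps s t) • (sigma1 t * sigma1 s) := by
  fin_cases s <;> fin_cases t <;>
  · ext i j
    fin_cases i <;> fin_cases j <;>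
      simp [sigma1, eps, Matrix.mul_apply, Fin.sum_univ_two, Matrix.one_apply]

lemma pauliTensor_sq (n : ℕ) (a : Fin n → Fin 4) :
    pauliTensor n a * pauliTensor n a = 1 := by
  rw [pauliTensor_mul]
  ext i j
  simp only [Matrix.of_apply]
  calc (∏ k, (sigma1 (a k) * sigma1 (a k)) (i k) (j k))
      = ∏ k, ((1 : Matrix (Fin 2) (Fin 2) ℂ) (i k) (j k)) := by
        refine Finset.prod_congr rfl fun k _ => by rw [sigma1_sq]
    _ = ∏ k, (if i k = j k then (1:ℂ) else 0) := by
        refine Finset.prod_congr rfl fun k _ => by rw [Matrix.one_apply]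
    _ = (1 : QOp n) i j := by
        rw [Finset.prod_boole, Matrix.one_apply]
        simp [funext_iff]

lemma isUnit_pauliTensor (n : ℕ) (a : Fin n → Fin 4) : IsUnit (pauliTensor n a) :=
  ⟨⟨_, _, pauliTensor_sq n a, pauliTensor_sq n a⟩, rfl⟩

lemma pauliTensor_comm (n : ℕ) (a b : Fin n → Fin 4) :
    pauliTensor n a * pauliTensor n b =
      ((-1 : ℂ) ^ (∑ k, eps (a k) (b k))) • (pauliTensor n b * pauliTensor n a) := by
  rw [pauliTensor_mul, pauliTensor_mul]
  ext i j
  simp only [Matrix.of_apply, Matrix.smul_apply, smul_eq_mul]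
  calc (∏ k, (sigma1 (a k) * sigma1 (b k)) (i k) (j k))
      = ∏ k, (((-1:ℂ) ^ eps (a k) (b k)) * (sigma1 (b k) * sigma1 (a k)) (i k) (j k)) := by
        refine Finset.prod_congr rfl fun k _ => by rw [sigma1_comm]; rfl
    _ = ((-1:ℂ) ^ (∑ k, eps (a k) (b k))) * ∏ k, (sigma1 (b k) * sigma1 (a k)) (i k) (j k) := by
        rw [Finset.prod_mul_distrib, Finset.prod_pow_eq_pow_sum]

lemma zmod2_cases (x : ZMod 2) : x = 0 ∨ x = 1 := by
  fin_cases x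
  · exact Or.inl rfl
  · exact Or.inr rfl

/-- sign character -/
def χ (e : ZMod 2) : ℂ := if e = 0 then 1 else -1

lemma χ_ne_zero (e : ZMod 2) : χ e ≠ 0 := by
  unfold χ; split <;> norm_num

lemma χ_add (p q : ZMod 2) : χ (p + q) = χ p * χ q := by
  rcases zmod2_cases p with rfl | rfl <;> rcases zmod2_cases q with rfl | rfl <;>
    simp [χ, show (1:ZMod 2) + 1 = 0 from rfl]

lemma χ_natCast (N : ℕ) : χ (N : ZMod 2) = (-1 : ℂ) ^ N := by
  induction N with
  | zero => simp [χ]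
  | succ k ih =>
    push_cast
    rw [χ_add, ih, pow_succ]
    simp [χ, mul_comm]

/-- `A` and `C` "sign-commute" with sign `χ e`. -/
def sc {n : ℕ} (A C : QOp n) (e : ZMod 2) : Prop := A * C = χ e • (C * A)

lemma sc_one {n : ℕ} (C : QOp n) : sc 1 C 0 := by simp [sc, χ]

lemma sc_mul {n : ℕ} {A B C : QOp n} {p q : ZMod 2} (hA : sc A C p) (hB : sc B C q) :
    sc (A * B) C (p + q) := by
  unfold sc at *
  rw [mul_assoc, hB, mul_smul_comm, ← mul_assoc, hA, smul_mul_assoc, smul_smul, χ_add,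
    mul_comm (χ q) (χ p), mul_assoc]

lemma sc_smul {n : ℕ} {A C : QOp n} {e : ZMod 2} (c : ℂ) (h : sc A C e) :
    sc (c • A) C e := by
  unfold sc at *
  rw [smul_mul_assoc, h, mul_smul_comm, smul_comm]

lemma sc_smul_right {n : ℕ} {A C : QOp n} {e : ZMod 2} (c : ℂ) (h : sc A C e) :
    sc A (c • C) e := by
  unfold sc at *
  rw [mul_smul_comm, h, smul_mul_assoc, smul_comm]

lemma sc_symm {n : ℕ} {A C : QOp n} {e : ZMod 2} (h : sc A C e) : sc C A e := by
  unfold sc at *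
  have : χ e • (A * C) = χ e • (χ e • (C * A)) := by rw [h]
  rw [smul_smul] at this
  have he : χ e * χ e = 1 := by rcases zmod2_cases e with rfl | rfl <;> simp [χ]
  rw [he, one_smul] at this
  exact this.symm

lemma sc_pow {n : ℕ} {A C : QOp n} {e : ZMod 2} (d : ZMod 2) (h : sc A C e) :
    sc (A ^ (d.val)) C (d * e) := by
  have : d = 0 ∨ d = 1 := zmod2_cases d
  rcases this with h0 | h1
  · subst h0; simpa using sc_one C
  · subst h1
    have hv : ((1:ZMod 2)).val = 1 := rfl
    rw [hv, pow_one, one_mul]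
    exact h

lemma sc_list {n : ℕ} {C : QOp n} {ι₀ : Type*} (A : ι₀ → QOp n) (g : ι₀ → ZMod 2)
    (l : List ι₀) (h : ∀ i ∈ l, sc (A i) C (g i)) :
    sc (l.map A).prod C (l.map g).sum := by
  induction l with
  | nil => simpa using sc_one C
  | cons x xs ih =>
    simp only [List.map_cons, List.prod_cons, List.sum_cons]
    exact sc_mul (h x (by simp)) (ih fun i hi => h i (by simp [hi]))

lemma comm_of_sc {n : ℕ} {A C : QOp n} {e : ZMod 2} (h : sc A C e) (hCA : C * A ≠ 0) :
    commBit A C = e := by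
  unfold sc at h
  unfold commBit
  have : e = 0 ∨ e = 1 := zmod2_cases e
  rcases this with h0 | h1
  · subst h0; rw [if_pos]; rw [h]; simp [χ]
  · subst h1
    rw [if_neg]
    intro hc
    rw [h] at hc
    simp only [χ, if_neg one_ne_zero] at hc
    apply hCA
    have h2 : (2 : ℂ) • (C * A) = 0 := by
      rw [two_smul]
      nth_rewrite 1 [← hc]
      simp
    simpa using h2

lemma isUnit_of_isPauli {n : ℕ} {P : QOp n} (h : IsPauli P) : IsUnit P := by
  obtain ⟨s, a, rfl⟩ := h
  have h1 : IsUnit (pauliTensor n a) := isUnit_pauliTensor n a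
  have hc : (Complex.I ^ (s:ℕ)) ≠ 0 := pow_ne_zero _ Complex.I_ne_zero
  have h2 : IsUnit ((Complex.I ^ (s:ℕ)) • (1 : QOp n)) := by
    refine ⟨⟨_, ((Complex.I ^ (s:ℕ))⁻¹) • (1 : QOp n), ?_, ?_⟩, rfl⟩ <;>
      rw [smul_mul_smul_comm, mul_one] <;>
      [rw [mul_inv_cancel₀ hc, one_smul]; rw [inv_mul_cancel₀ hc, one_smul]]
  have : (Complex.I ^ (s:ℕ)) • pauliTensor n a = ((Complex.I ^ (s:ℕ)) • (1 : QOp n)) * pauliTensor n a := by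
    rw [smul_mul_assoc, one_mul]
  rw [this]
  exact h2.mul h1

lemma sc_of_paulis {n : ℕ} {A B : QOp n} (hA : IsPauli A) (hB : IsPauli B) :
    sc A B (commBit A B) := by
  obtain ⟨s, a, rfl⟩ := hA
  obtain ⟨t, b, rfl⟩ := hB
  have hsc : sc (Complex.I ^ (s:ℕ) • pauliTensor n a) (Complex.I ^ (t:ℕ) • pauliTensor n b)
      ((∑ k, eps (a k) (b k) : ℕ) : ZMod 2) := by
    apply sc_smul
    apply sc_smul_right
    unfold sc
    rw [χ_natCast]
    exact pauliTensor_comm n a b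
  have hne : (Complex.I ^ (t:ℕ) • pauliTensor n b) * (Complex.I ^ (s:ℕ) • pauliTensor n a) ≠ 0 := by
    apply IsUnit.ne_zero
    exact (isUnit_of_isPauli ⟨t, b, rfl⟩).mul (isUnit_of_isPauli ⟨s, a, rfl⟩)
  rw [comm_of_sc hsc hne]
  exact hsc

def Jb (a b : ℕ) : ZMod 2 := if a ≠ b ∧ a / 2 = b / 2 then 1 else 0

lemma phi_expand {ι : Type} [Fintype ι] (B : Matrix ι ι (ZMod 2)) (x y : ι → ZMod 2) :
    x ⬝ᵥ B *ᵥ y = ∑ i, ∑ j, x i * B i j * y j := by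
  simp [dotProduct, Matrix.mulVec, Finset.mul_sum, mul_assoc, mul_comm, mul_left_comm]

lemma phi_symm {ι : Type} [Fintype ι] {B : Matrix ι ι (ZMod 2)}
    (hsymm : ∀ i j, B i j = B j i) (x y : ι → ZMod 2) :
    x ⬝ᵥ B *ᵥ y = y ⬝ᵥ B *ᵥ x := by
  rw [phi_expand, phi_expand, Finset.sum_comm]
  refine Finset.sum_congr rfl fun i _ => Finset.sum_congr rfl fun j _ => ?_
  rw [hsymm j i]; ring

lemma phi_alt {ι : Type} [Fintype ι] {B : Matrix ι ι (ZMod 2)}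
    (hsymm : ∀ i j, B i j = B j i) (hdiag : ∀ i, B i i = 0) (x : ι → ZMod 2) :
    x ⬝ᵥ B *ᵥ x = 0 := by
  rw [phi_expand, ← Finset.sum_product']
  refine Finset.sum_involution (fun p _ => p.swap) ?_ ?_ (fun p hp => Finset.mem_univ _) ?_
  · intro p _
    have hz : ∀ z : ZMod 2, z + z = 0 := by decide
    have : x p.swap.1 * B p.swap.1 p.swap.2 * x p.swap.2 = x p.1 * B p.1 p.2 * x p.2 := by
      simp only [Prod.fst_swap, Prod.snd_swap]
      rw [hsymm p.2 p.1]; ring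
    rw [this]; exact hz _
  · intro p _ hne hswap
    apply hne
    have h12 : p.2 = p.1 := congrArg Prod.fst hswap
    rw [h12, hdiag]; ring
  · intro p _
    exact Prod.swap_swap p
lemma phi_sum_left {ι κ : Type} [Fintype ι] (B : Matrix ι ι (ZMod 2)) (s : Finset κ)
    (g : κ → ι → ZMod 2) (y : ι → ZMod 2) :
    (∑ a ∈ s, g a) ⬝ᵥ B *ᵥ y = ∑ a ∈ s, (g a ⬝ᵥ B *ᵥ y) := by
  simp only [dotProduct, Finset.sum_apply, Finset.sum_mul]
  rw [Finset.sum_comm]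

lemma zmod2_ne_zero {x : ZMod 2} (h : x ≠ 0) : x = 1 := by revert h; revert x; decide

lemma zmod2_add_self (x : ZMod 2) : x + x = 0 := by revert x; decide

lemma partB (m : ℕ) : ∀ (ι : Type) (_ : Fintype ι) (_ : DecidableEq ι) (B : Matrix ι ι (ZMod 2)),
    Fintype.card ι = 2 * m → (∀ i j, B i j = B j i) → (∀ i, B i i = 0) → IsUnit B →
    ∃ f : Fin (2 * m) → ι → ZMod 2, ∀ j j', f j ⬝ᵥ B *ᵥ f j' = Jb j.val j'.val := by
  induction m with
  | zero =>
    intro ι _ _ B hcard _ _ _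
    exact ⟨fun j => absurd j.2 (by omega), fun j => absurd j.2 (by omega)⟩
  | succ m IH =>
    intro ι instF instD B hcard hsymm hdiag hunit
    have hdet : B.det ≠ 0 := by
      intro h
      exact not_isUnit_zero (h ▸ (Matrix.isUnit_iff_isUnit_det B).mp hunit)
    have hker : ∀ z : ι → ZMod 2, z ᵥ* B = 0 → z = 0 := by
      intro z hz
      by_contra hz0
      exact hdet ((Matrix.exists_vecMul_eq_zero_iff).mp ⟨z, hz0, hz⟩)
    obtain ⟨i0⟩ : Nonempty ι := Fintype.card_pos_iff.mp (by omega)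
    have hrow : ∃ i1, B i0 i1 ≠ 0 := by
      by_contra h
      push_neg at h
      have h1 : (Pi.single i0 (1 : ZMod 2)) ᵥ* B = 0 := by
        rw [Matrix.single_vecMul]
        funext i; simp [h i]
      have h3 := hker _ h1
      have h2 := congrFun h3 i0
      simp at h2
    obtain ⟨i1, h01⟩ := hrow
    have hB01 : B i0 i1 = 1 := zmod2_ne_zero h01
    have hi10 : i1 ≠ i0 := by
      intro h; rw [h] at hB01; rw [hdiag] at hB01; exact zero_ne_one hB01
    set u : ι → ZMod 2 := Pi.single i0 1 with hu
    set w : ι → ZMod 2 := Pi.single i1 1 with hw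
    set φ : (ι → ZMod 2) → (ι → ZMod 2) → ZMod 2 := fun x y => x ⬝ᵥ B *ᵥ y with hφ
    have φsymm : ∀ x y, φ x y = φ y x := fun x y => phi_symm hsymm x y
    have φalt : ∀ x, φ x x = 0 := fun x => phi_alt hsymm hdiag x
    have φaddl : ∀ x y z, φ (x + y) z = φ x z + φ y z := by
      intro x y z; simp [hφ, add_dotProduct]
    have φsmull : ∀ (c : ZMod 2) x z, φ (c • x) z = c * φ x z := by
      intro c x z; simp [hφ, smul_dotProduct, smul_eq_mul]
    have φaddr : ∀ x y z, φ x (y + z) = φ x y + φ x z := by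
      intro x y z; rw [φsymm, φaddl, φsymm y x, φsymm z x]
    have φsmulr : ∀ (c : ZMod 2) x z, φ x (c • z) = c * φ x z := by
      intro c x z; rw [φsymm, φsmull, φsymm z x]
    have φsuml : ∀ {κ : Type} (s : Finset κ) (g : κ → ι → ZMod 2) (y : ι → ZMod 2),
        φ (∑ a ∈ s, g a) y = ∑ a ∈ s, φ (g a) y := by
      intro κ s g y; exact phi_sum_left B s g y
    have hφuw : φ u w = 1 := by
      simp [hφ, hu, hw, dotProduct_single, single_dotProduct, hB01]
    have hφwu : φ w u = 1 := by rw [φsymm]; exact hφuw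
    set π : (ι → ZMod 2) → (ι → ZMod 2) := fun x => x + φ x w • u + φ x u • w with hπ
    have hπu : ∀ x, φ (π x) u = 0 := by
      intro x
      simp only [hπ, φaddl, φsmull]
      rw [φalt u, hφwu, mul_zero, add_zero, mul_one]
      exact zmod2_add_self _
    have hπw : ∀ x, φ (π x) w = 0 := by
      intro x
      simp only [hπ, φaddl, φsmull]
      rw [φalt w, hφuw, mul_zero, add_zero, mul_one]
      exact zmod2_add_self _
    have hππ : ∀ x y, φ (π x) (π y) = φ (π x) y := by
      intro x y
      simp only [hπ] at *
      rw [φaddr, φaddr, φsmulr, φsmulr]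
      rw [hπu x, hπw x]
      ring
    -- the reduced index type
    have hzmod5 : ∀ s c uu d ww : ZMod 2, s = s + c*uu + d*ww + c*uu + d*ww := by decide
    set e : {i : ι // i ≠ i0 ∧ i ≠ i1} → ι → ZMod 2 := fun a => π (Pi.single a.1 1) with he
    have hcard' : Fintype.card {i : ι // i ≠ i0 ∧ i ≠ i1} = 2 * m := by
      have h1 : Fintype.card {i : ι // i ≠ i0 ∧ i ≠ i1}
          = (Finset.univ.filter (fun i => i ≠ i0 ∧ i ≠ i1)).card := Fintype.card_subtype _
      have h2 : Finset.univ.filter (fun i => i ≠ i0 ∧ i ≠ i1)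
          = (Finset.univ : Finset ι) \ {i0, i1} := by
        ext i; simp [not_or]
      have h3 : ({i0, i1} : Finset ι).card = 2 := by
        rw [Finset.card_insert_of_notMem (by simp [Finset.mem_singleton]; exact Ne.symm hi10),
          Finset.card_singleton]
      rw [h1, h2, Finset.card_sdiff_of_subset (Finset.subset_univ _), Finset.card_univ, hcard, h3]
      omega
    have single_decomp : ∀ a : {i : ι // i ≠ i0 ∧ i ≠ i1},
        Pi.single a.1 (1 : ZMod 2) = e a + φ (Pi.single a.1 1) w • u + φ (Pi.single a.1 1) u • w := by
      intro a
      funext i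
      simp only [he, hπ, Pi.add_apply, Pi.smul_apply, smul_eq_mul]
      exact hzmod5 _ _ _ _ _
    set B' : Matrix {i : ι // i ≠ i0 ∧ i ≠ i1} {i : ι // i ≠ i0 ∧ i ≠ i1} (ZMod 2) :=
      Matrix.of fun a b => φ (e a) (e b) with hB'
    have hB'symm : ∀ a b, B' a b = B' b a := fun a b => φsymm _ _
    have hB'diag : ∀ a, B' a a = 0 := fun a => φalt _
    -- lifting map
    set L : ({i : ι // i ≠ i0 ∧ i ≠ i1} → ZMod 2) → ι → ZMod 2 :=
      fun v => ∑ a, v a • e a with hL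
    have hLu : ∀ v, φ (L v) u = 0 := by
      intro v
      rw [hL]
      rw [φsuml]
      refine Finset.sum_eq_zero fun a _ => ?_
      rw [φsmull, he, hπu, mul_zero]
    have hLw : ∀ v, φ (L v) w = 0 := by
      intro v
      rw [hL]
      rw [φsuml]
      refine Finset.sum_eq_zero fun a _ => ?_
      rw [φsmull, he, hπw, mul_zero]
    have hLe : ∀ v b, φ (L v) (e b) = (v ᵥ* B') b := by
      intro v b
      rw [hL, φsuml]
      rw [Matrix.vecMul, dotProduct]
      refine Finset.sum_congr rfl fun a _ => ?_
      rw [φsmull, hB']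
      rfl
    have hLφ : ∀ v v', φ (L v) (L v') = v ⬝ᵥ B' *ᵥ v' := by
      intro v v'
      have h1 : ∀ a, φ (e a) (L v') = (B' *ᵥ v') a := by
        intro a
        rw [φsymm, hL, φsuml, Matrix.mulVec, dotProduct]
        refine Finset.sum_congr rfl fun b _ => ?_
        rw [φsmull, φsymm, hB']
        simp [mul_comm]
      rw [hL, φsuml, dotProduct]
      refine Finset.sum_congr rfl fun a _ => ?_
      rw [φsmull]
      exact congrArg (fun t => v a * t) (h1 a)
    have hLcoord : ∀ v a, L v a.1 = v a := by
      intro v a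
      simp only [hL, Finset.sum_apply]
      have h1 : ∀ b, (v b • e b) a.1 = v b * (if (a : ι) = b.1 then 1 else 0) := by
        intro b
        simp only [Pi.smul_apply, smul_eq_mul]
        congr 1
        rw [he]
        simp only [hπ, Pi.add_apply, Pi.smul_apply, smul_eq_mul, hu, hw]
        rw [Pi.single_eq_of_ne a.2.1, Pi.single_eq_of_ne a.2.2, Pi.single_apply]
        ring
      simp only [h1]
      have h2 : ∀ b : {i : ι // i ≠ i0 ∧ i ≠ i1},
          (if (a : ι) = b.1 then (1 : ZMod 2) else 0) = if b = a then 1 else 0 := by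
        intro b
        congr 1
        simp [Subtype.ext_iff, eq_comm]
      simp only [h2, mul_ite, mul_one, mul_zero]
      simp
    have hB'unit : IsUnit B' := by
      rw [Matrix.isUnit_iff_isUnit_det, isUnit_iff_ne_zero]
      intro hd0
      obtain ⟨v, hv0, hv⟩ := (Matrix.exists_vecMul_eq_zero_iff).mpr hd0
      apply hv0
      have hz_e : ∀ b, φ (L v) (e b) = 0 := by
        intro b; rw [hLe, hv]; rfl
      have hzB : (L v) ᵥ* B = 0 := by
        funext i
        have hvB : ((L v) ᵥ* B) i = φ (L v) (Pi.single i 1) := by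
          simp [hφ, Matrix.vecMul, Matrix.mulVec_single, dotProduct]
        rw [Pi.zero_apply, hvB]
        by_cases hi0' : i = i0
        · rw [hi0', ← hu]; exact hLu v
        by_cases hi1' : i = i1
        · rw [hi1', ← hw]; exact hLw v
        · set a : {i : ι // i ≠ i0 ∧ i ≠ i1} := ⟨i, hi0', hi1'⟩ with ha
          have : Pi.single i (1 : ZMod 2) = e a + φ (Pi.single i 1) w • u + φ (Pi.single i 1) u • w :=
            single_decomp a
          rw [this, φaddr, φaddr, φsmulr, φsmulr, hz_e a, hLu, hLw]
          ring
      have hz0 : L v = 0 := hker _ hzB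
      funext a
      rw [← hLcoord v a, hz0]
      rfl
    -- apply induction hypothesis
    obtain ⟨f', hf'⟩ := IH _ inferInstance inferInstance B' hcard' hB'symm hB'diag hB'unit
    refine ⟨fun j => if h0 : j.val = 0 then u else if h1 : j.val = 1 then w
      else L (f' ⟨j.val - 2, by omega⟩), ?_⟩
    intro j j'
    show φ _ _ = _
    by_cases h0 : j.val = 0 <;> by_cases h0' : j'.val = 0
    · simp only [h0, h0', dif_pos]
      rw [φalt]
      unfold Jb
      rw [if_neg (by omega)]
    · by_cases h1' : j'.val = 1
      · simp only [h0, h1', dif_pos, dif_neg (by omega : ¬ j'.val = 0)]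
        rw [dif_neg (by norm_num : ¬ (1:ℕ) = 0)]
        rw [hφuw]
        unfold Jb
        rw [if_pos (by omega)]
      · simp only [h0, dif_pos, dif_neg h0', dif_neg h1']
        rw [φsymm, hLu]
        unfold Jb
        rw [if_neg (by omega)]
    · by_cases h1 : j.val = 1
      · simp only [h0', h1, dif_pos, dif_neg (by omega : ¬ j.val = 0)]
        rw [dif_neg (by norm_num : ¬ (1:ℕ) = 0)]
        rw [hφwu]
        unfold Jb
        rw [if_pos (by omega)]
      · simp only [h0', dif_pos, dif_neg h0, dif_neg h1]
        rw [hLu]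
        unfold Jb
        rw [if_neg (by omega)]
    · by_cases h1 : j.val = 1 <;> by_cases h1' : j'.val = 1
      · simp only [h1, h1', dif_pos, dif_neg h0, dif_neg h0']
        rw [φalt]
        unfold Jb
        rw [if_neg (by omega)]
      · simp only [h1, dif_pos, dif_neg h0, dif_neg h0', dif_neg h1']
        rw [dif_neg (by norm_num : ¬ (1:ℕ) = 0)]
        rw [φsymm, hLw]
        unfold Jb
        rw [if_neg (by omega)]
      · simp only [h1', dif_pos, dif_neg h0, dif_neg h0', dif_neg h1]
        rw [dif_neg (by norm_num : ¬ (1:ℕ) = 0)]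
        rw [hLw]
        unfold Jb
        rw [if_neg (by omega)]
      · simp only [dif_neg h0, dif_neg h0', dif_neg h1, dif_neg h1']
        rw [hLφ, hf']
        unfold Jb
        have hiff : ((⟨j.val - 2, by omega⟩ : Fin (2*m)).val ≠ (⟨j'.val - 2, by omega⟩ : Fin (2*m)).val
            ∧ (⟨j.val - 2, by omega⟩ : Fin (2*m)).val / 2 = (⟨j'.val - 2, by omega⟩ : Fin (2*m)).val / 2)
            ↔ (j.val ≠ j'.val ∧ j.val / 2 = j'.val / 2) := by
          simp only [Fin.val_mk]
          omega
        rw [if_congr hiff rfl rfl]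
def σswap (m : ℕ) (k : Fin (2*m)) : Fin (2*m) :=
  ⟨2*(k.val/2) + (1 - k.val%2), by have := k.isLt; omega⟩

lemma Jb_eq (m : ℕ) (k k' : Fin (2*m)) :
    Jb k.val k'.val = if k' = σswap m k then 1 else 0 := by
  unfold Jb
  rw [if_congr (show (k.val ≠ k'.val ∧ k.val/2 = k'.val/2) ↔ k' = σswap m k by
    rw [Fin.ext_iff]
    show _ ↔ k'.val = 2*(k.val/2) + (1 - k.val%2)
    omega) rfl rfl]

lemma Jmat_mul_self (m : ℕ) :
    (Matrix.of fun j j' : Fin (2*m) => Jb j.val j'.val) *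
      (Matrix.of fun j j' : Fin (2*m) => Jb j.val j'.val) = 1 := by
  ext k k''
  simp only [Matrix.mul_apply, Matrix.of_apply, Jb_eq, ite_mul, one_mul, zero_mul]
  rw [Finset.sum_ite_eq' (Finset.univ : Finset (Fin (2*m))) (σswap m k)
    (fun k' => if k'' = σswap m k' then (1:ZMod 2) else 0)]
  rw [if_pos (Finset.mem_univ _)]
  have hσσ : σswap m (σswap m k) = k := by
    apply Fin.ext
    show 2*((2*(k.val/2) + (1 - k.val%2))/2) + (1 - (2*(k.val/2) + (1 - k.val%2))%2) = k.val
    have := k.isLt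
    omega
  rw [hσσ, Matrix.one_apply]
  exact if_congr eq_comm rfl rfl

lemma isUnit_Jmat (m : ℕ) :
    IsUnit ((Matrix.of fun j j' : Fin (2*m) => Jb j.val j'.val)) :=
  ⟨⟨_, _, Jmat_mul_self m, Jmat_mul_self m⟩, rfl⟩

lemma row_pairing {N : ℕ} (F B : Matrix (Fin N) (Fin N) (ZMod 2)) (j j' : Fin N) :
    (F * B * Fᵀ) j j' = (fun i => F j i) ⬝ᵥ B *ᵥ (fun i => F j' i) := by
  simp only [Matrix.mul_apply, dotProduct, Matrix.mulVec, Matrix.transpose_apply,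
    Finset.sum_mul, Finset.mul_sum, dotProduct]
  rw [Finset.sum_comm]
  exact Finset.sum_congr rfl fun i _ => Finset.sum_congr rfl fun i' _ => by ring
/-- Symplectic Gram–Schmidt: if the commutation matrix `B` of Pauli unitaries `P₁,…,P_{2m}`
is invertible over `F₂`, there is an invertible `F` over `F₂` so that the products
`Q_j = ∏ᵢ Pᵢ^{F_{j,i}}` form a symplectic basis, i.e. `Q_{2k-1}` and `Q_{2k}` anticommute
and all other pairs commute. -/
theorem symplectic_basis_exists (n m : ℕ) (P : Fin (2 * m) → QOp n)
    (hP : ∀ i, IsPauli (P i))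
    (hB : IsUnit (Matrix.of (fun i j => commBit (P i) (P j)) :
        Matrix (Fin (2 * m)) (Fin (2 * m)) (ZMod 2))) :
    ∃ F : Matrix (Fin (2 * m)) (Fin (2 * m)) (ZMod 2), IsUnit F ∧
      ∀ j j' : Fin (2 * m),
        commBit ((List.ofFn fun i => P i ^ (F j i).val).prod)
            ((List.ofFn fun i => P i ^ (F j' i).val).prod)
          = if j ≠ j' ∧ (j : ℕ) / 2 = (j' : ℕ) / 2 then 1 else 0 := by
  classical
  set Bmat : Matrix (Fin (2*m)) (Fin (2*m)) (ZMod 2) :=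
    Matrix.of (fun i j => commBit (P i) (P j)) with hBmat
  have hsymm : ∀ i j, Bmat i j = Bmat j i := by
    intro i j
    simp only [hBmat, Matrix.of_apply, commBit]
    exact if_congr eq_comm rfl rfl
  have hdiag : ∀ i, Bmat i i = 0 := by
    intro i
    simp [hBmat, commBit]
  obtain ⟨f, hf⟩ := partB m (Fin (2*m)) inferInstance inferInstance Bmat
    (Fintype.card_fin _) hsymm hdiag hB
  set F : Matrix (Fin (2*m)) (Fin (2*m)) (ZMod 2) := Matrix.of fun j i => f j i with hF
  have hFBF : F * Bmat * Fᵀ = Matrix.of fun j j' : Fin (2*m) => Jb j.val j'.val := by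
    ext j j'
    rw [row_pairing]
    exact hf j j'
  have hFunit : IsUnit F := by
    have hJ := isUnit_Jmat m
    rw [← hFBF] at hJ
    have hdetJ := (Matrix.isUnit_iff_isUnit_det _).mp hJ
    rw [Matrix.det_mul, Matrix.det_mul, Matrix.det_transpose] at hdetJ
    exact (Matrix.isUnit_iff_isUnit_det F).mpr
      (isUnit_of_mul_isUnit_left (isUnit_of_mul_isUnit_left hdetJ))
  refine ⟨F, hFunit, ?_⟩
  intro j j'
  have hsc : ∀ i i', sc (P i) (P i') (commBit (P i) (P i')) :=
    fun i i' => sc_of_paulis (hP i) (hP i')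
  have hQunit : ∀ g : Fin (2*m) → ZMod 2,
      IsUnit ((List.ofFn fun i => P i ^ (g i).val).prod) := by
    intro g
    apply List.prod_isUnit
    intro x hx
    rw [List.mem_ofFn] at hx
    obtain ⟨i, rfl⟩ := hx
    exact (isUnit_of_isPauli (hP i)).pow _
  have inner : ∀ i, sc (P i) ((List.ofFn fun i' => P i' ^ (F j' i').val).prod)
      (∑ i', F j' i' * commBit (P i') (P i)) := by
    intro i
    apply sc_symm
    rw [List.ofFn_eq_map]
    have := sc_list (fun i' => P i' ^ (F j' i').val)
      (fun i' => F j' i' * commBit (P i') (P i)) (List.finRange (2*m))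
      (fun i' _ => sc_pow (F j' i') (hsc i' i))
    have hsum : ((List.finRange (2*m)).map (fun i' => F j' i' * commBit (P i') (P i))).sum
        = ∑ i', F j' i' * commBit (P i') (P i) := by
      rw [← List.ofFn_eq_map, List.sum_ofFn]
    rwa [hsum] at this
  have outer : sc ((List.ofFn fun i => P i ^ (F j i).val).prod)
      ((List.ofFn fun i' => P i' ^ (F j' i').val).prod)
      (∑ i, F j i * (∑ i', F j' i' * commBit (P i') (P i))) := by
    rw [List.ofFn_eq_map]
    have := sc_list (fun i => P i ^ (F j i).val)
      (fun i => F j i * (∑ i', F j' i' * commBit (P i') (P i))) (List.finRange (2*m))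
      (fun i _ => sc_pow (F j i) (inner i))
    have hsum : ((List.finRange (2*m)).map
        (fun i => F j i * (∑ i', F j' i' * commBit (P i') (P i)))).sum
        = ∑ i, F j i * (∑ i', F j' i' * commBit (P i') (P i)) := by
      rw [← List.ofFn_eq_map, List.sum_ofFn]
    rwa [hsum] at this
  have hne : ((List.ofFn fun i' => P i' ^ (F j' i').val).prod) *
      ((List.ofFn fun i => P i ^ (F j i).val).prod) ≠ 0 :=
    ((hQunit _).mul (hQunit _)).ne_zero
  rw [comm_of_sc outer hne]
  have key : (∑ i, F j i * (∑ i', F j' i' * commBit (P i') (P i)))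
      = f j ⬝ᵥ Bmat *ᵥ f j' := by
    simp only [dotProduct, Matrix.mulVec]
    refine Finset.sum_congr rfl fun i _ => ?_
    have h1 : (∑ i', F j' i' * commBit (P i') (P i)) = ∑ i', Bmat i i' * f j' i' := by
      refine Finset.sum_congr rfl fun i' _ => ?_
      rw [mul_comm]
      congr 1
      exact (hsymm i i').symm ▸ rfl
    rw [h1]
    rfl
  rw [key, hf j j']
  unfold Jb
  exact if_congr (and_congr (not_congr Fin.ext_iff).symm Iff.rfl) rfl rfl
end
end

section
/- Let M and S be two stabilizer groups on n qubits. Then the quotient groups M/(M ∩ S^⊥) and S/(S ∩ M^⊥) are commutative groups of the same size. -/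
open Matrix
open scoped Classical

noncomputable section

/-- A unit of the matrix algebra is a Pauli unitary. -/
def IsPauliU {n : ℕ} (u : (QOp n)ˣ) : Prop := IsPauli (u : QOp n)

/-- The `F₂` commutator bit on a group: `0` if the elements commute, `1` otherwise. -/
def commBitU {G : Type*} [Group G] (g h : G) : ZMod 2 := if g * h = h * g then 0 else 1

/-- A stabilizer group: a group of pairwise-commuting Hermitian Pauli observables
not containing `-I`. -/
def IsStabilizerGroup {n : ℕ} (S : Subgroup (QOp n)ˣ) : Prop :=
  (∀ g ∈ S, IsPauliU g ∧ ((g : QOp n))ᴴ = (g : QOp n)) ∧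
  (∀ g ∈ S, ∀ h ∈ S, g * h = h * g) ∧
  (-1 : (QOp n)ˣ) ∉ S

/- ### auxiliary lemmas -/

lemma sigma_dichot (a b : Fin 4) :
    sigma1 a * sigma1 b = sigma1 b * sigma1 a ∨
    sigma1 a * sigma1 b = -(sigma1 b * sigma1 a) := by
  fin_cases a <;> fin_cases b <;>
    simp only [sigma1, Matrix.one_fin_two] <;>
    norm_num [Matrix.mul_fin_two] <;>
    · right
      ext i j
      fin_cases i <;> fin_cases j <;> simp [Complex.I_mul_I]

lemma sigma_sq (a : Fin 4) : sigma1 a * sigma1 a = 1 := by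
  fin_cases a <;>
    simp only [sigma1, Matrix.one_fin_two] <;>
    norm_num [Matrix.mul_fin_two] <;>
    · ext i j
      fin_cases i <;> fin_cases j <;> simp [Complex.I_mul_I]

def qTprod (n : ℕ) (A : Fin n → Matrix (Fin 2) (Fin 2) ℂ) : QOp n :=
  Matrix.of fun i j => ∏ k, A k (i k) (j k)

lemma qTprod_mul (n : ℕ) (A B : Fin n → Matrix (Fin 2) (Fin 2) ℂ) :
    qTprod n A * qTprod n B = qTprod n (fun k => A k * B k) := by
  ext i j
  simp only [qTprod, Matrix.mul_apply, Matrix.of_apply]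
  rw [Finset.prod_univ_sum, Fintype.piFinset_univ]
  exact Finset.sum_congr rfl fun m _ => (Finset.prod_mul_distrib).symm

lemma qTprod_smul (n : ℕ) (c : Fin n → ℂ) (A : Fin n → Matrix (Fin 2) (Fin 2) ℂ) :
    qTprod n (fun k => c k • A k) = (∏ k, c k) • qTprod n A := by
  ext i j
  simp [qTprod, Finset.prod_mul_distrib]

lemma qTprod_one (n : ℕ) : qTprod n (fun _ => (1 : Matrix (Fin 2) (Fin 2) ℂ)) = 1 := by
  ext i j
  simp only [qTprod, Matrix.of_apply, Matrix.one_apply]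
  by_cases h : i = j
  · subst h; simp
  · rw [if_neg h]
    obtain ⟨k, hk⟩ : ∃ k, i k ≠ j k := by
      by_contra hc; push_neg at hc; exact h (funext hc)
    exact Finset.prod_eq_zero (Finset.mem_univ k) (by simp [Matrix.one_apply, hk])

lemma pauliTensor_eq_qTprod (n : ℕ) (a : Fin n → Fin 4) :
    pauliTensor n a = qTprod n (fun k => sigma1 (a k)) := rfl

lemma pauliTensor_dichot {n : ℕ} (a b : Fin n → Fin 4) :
    pauliTensor n a * pauliTensor n b = pauliTensor n b * pauliTensor n a ∨
    pauliTensor n a * pauliTensor n b = -(pauliTensor n b * pauliTensor n a) := by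
  classical
  set ε : Fin n → ℂ := fun k =>
    if sigma1 (a k) * sigma1 (b k) = sigma1 (b k) * sigma1 (a k) then 1 else -1 with hε
  have hsite : ∀ k, sigma1 (a k) * sigma1 (b k) = ε k • (sigma1 (b k) * sigma1 (a k)) := by
    intro k
    by_cases h : sigma1 (a k) * sigma1 (b k) = sigma1 (b k) * sigma1 (a k)
    · simp [hε, h]
    · rcases sigma_dichot (a k) (b k) with h' | h'
      · exact absurd h' h
      · simp only [hε, if_neg h]
        rw [h', neg_smul, one_smul]
  have hεpm : ∀ k, ε k = 1 ∨ ε k = -1 := by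
    intro k; simp only [hε]; split <;> simp
  have hprod : (∏ k, ε k) = 1 ∨ (∏ k, ε k) = -1 := by
    refine Finset.prod_induction ε (fun x => x = 1 ∨ x = -1) ?_ (Or.inl rfl)
      (fun k _ => hεpm k)
    rintro x y (rfl | rfl) (rfl | rfl) <;> norm_num
  rw [pauliTensor_eq_qTprod n a, pauliTensor_eq_qTprod n b, qTprod_mul, qTprod_mul]
  have : (fun k => sigma1 (a k) * sigma1 (b k))
      = fun k => ε k • (sigma1 (b k) * sigma1 (a k)) := funext hsite
  rw [this, qTprod_smul]
  rcases hprod with h | h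
  · left; rw [h, one_smul]
  · right; rw [h, neg_smul, one_smul]

lemma pauli_dichot {n : ℕ} {P Q : QOp n} (hP : IsPauli P) (hQ : IsPauli Q) :
    P * Q = Q * P ∨ P * Q = -(Q * P) := by
  obtain ⟨s, a, rfl⟩ := hP
  obtain ⟨t, b, rfl⟩ := hQ
  have e1 : ∀ (c d : ℂ) (X Y : QOp n), (c • X) * (d • Y) = (c * d) • (X * Y) := by
    intro c d X Y; rw [smul_mul_assoc, mul_smul_comm, smul_smul]
  rw [e1, e1]
  rcases pauliTensor_dichot a b with h | h
  · left; rw [h, mul_comm]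
  · right; rw [h, smul_neg, mul_comm]

lemma unit_val_ne_zero {n : ℕ} (u : (QOp n)ˣ) : (u : QOp n) ≠ 0 := by
  intro h
  have h1 : (1 : QOp n) = 0 := by
    calc (1 : QOp n) = ↑u⁻¹ * ↑u := by rw [Units.inv_mul]
    _ = 0 := by rw [h, mul_zero]
  exact one_ne_zero h1

lemma mat_ne_neg_self {n : ℕ} {X : QOp n} (hX : X ≠ 0) : X ≠ -X := by
  intro h
  apply hX
  ext i j
  have h2 := congrArg (fun Y : QOp n => Y i j) h
  simp only [Matrix.neg_apply] at h2
  have h3 : (2 : ℂ) * X i j = 0 := by linear_combination h2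
  rcases mul_eq_zero.mp h3 with h4 | h4
  · norm_num at h4
  · exact h4

lemma anti_ncomm {n : ℕ} (a b : (QOp n)ˣ)
    (h : (a : QOp n) * b = -((b : QOp n) * a)) :
    ¬((a : QOp n) * b = (b : QOp n) * a) := by
  intro hc
  have hne : ((b * a : (QOp n)ˣ) : QOp n) ≠ 0 := unit_val_ne_zero _
  rw [Units.val_mul] at hne
  exact mat_ne_neg_self hne (hc.symm.trans h)

lemma commBitU_matrix {n : ℕ} (u v : (QOp n)ˣ) :
    commBitU u v = if (u : QOp n) * v = (v : QOp n) * u then 0 else 1 := by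
  simp only [commBitU, Units.ext_iff, Units.val_mul]

lemma commBitU_mul_left {n : ℕ} {u v w : (QOp n)ˣ}
    (hu : IsPauliU u) (hv : IsPauliU v) (hw : IsPauliU w) :
    commBitU (u * v) w = commBitU u w + commBitU v w := by
  rw [commBitU_matrix, commBitU_matrix, commBitU_matrix, Units.val_mul]
  rcases pauli_dichot hu hw with h1 | h1 <;> rcases pauli_dichot hv hw with h2 | h2
  · have hc : (u : QOp n) * v * w = (w : QOp n) * ((u : QOp n) * v) := by
      rw [mul_assoc, h2, ← mul_assoc, h1, mul_assoc]
    rw [if_pos hc, if_pos h1, if_pos h2]; rfl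
  · have hc : (u : QOp n) * v * w = -((w : QOp n) * ((u : QOp n) * v)) := by
      rw [mul_assoc, h2, mul_neg, ← mul_assoc, h1, mul_assoc]
    have hnc := anti_ncomm (u * v) w (by rwa [Units.val_mul])
    rw [Units.val_mul] at hnc
    rw [if_neg hnc, if_pos h1, if_neg (anti_ncomm v w h2)]
    rfl
  · have hc : (u : QOp n) * v * w = -((w : QOp n) * ((u : QOp n) * v)) := by
      rw [mul_assoc, h2, ← mul_assoc, h1, neg_mul, mul_assoc]
    have hnc := anti_ncomm (u * v) w (by rwa [Units.val_mul])
    rw [Units.val_mul] at hnc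
    rw [if_neg hnc, if_neg (anti_ncomm u w h1), if_pos h2]
    rfl
  · have hc : (u : QOp n) * v * w = (w : QOp n) * ((u : QOp n) * v) := by
      rw [mul_assoc, h2, mul_neg, ← mul_assoc, h1, neg_mul, neg_neg, mul_assoc]
    rw [if_pos hc, if_neg (anti_ncomm u w h1), if_neg (anti_ncomm v w h2)]
    decide

lemma commBitU_symm {G : Type*} [Group G] (g h : G) : commBitU g h = commBitU h g := by
  simp only [commBitU]
  by_cases hc : g * h = h * g
  · rw [if_pos hc, if_pos hc.symm]
  · rw [if_neg hc, if_neg (fun hx => hc hx.symm)]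

lemma commBitU_one_left {G : Type*} [Group G] (h : G) : commBitU 1 h = 0 := by
  simp [commBitU]

lemma commBitU_eq_zero_iff {G : Type*} [Group G] (g h : G) :
    commBitU g h = 0 ↔ g * h = h * g := by
  unfold commBitU; split <;> simp_all

lemma stab_fin {n : ℕ} (S : Subgroup (QOp n)ˣ) (hS : IsStabilizerGroup S) : Finite S := by
  have hfin : Set.Finite {P : QOp n | IsPauli P} := by
    have hsub : {P : QOp n | IsPauli P} ⊆
        Set.range (fun p : Fin 4 × (Fin n → Fin 4) =>
          Complex.I ^ ((p.1 : ℕ)) • pauliTensor n p.2) := by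
      rintro P ⟨s, a, rfl⟩; exact ⟨(s, a), rfl⟩
    exact (Set.finite_range _).subset hsub
  haveI := hfin.to_subtype
  refine Finite.of_injective
    (fun g : S => (⟨(g : (QOp n)ˣ), (hS.1 _ g.2).1⟩ : {P : QOp n | IsPauli P})) ?_
  intro a b h
  have h2 : ((a : (QOp n)ˣ) : QOp n) = ((b : (QOp n)ˣ) : QOp n) := congrArg Subtype.val h
  exact Subtype.ext (Units.ext h2)

lemma stab_sq {n : ℕ} (S : Subgroup (QOp n)ˣ) (hS : IsStabilizerGroup S)
    {g : (QOp n)ˣ} (hg : g ∈ S) : g * g = 1 := by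
  obtain ⟨s, a, hP⟩ := (hS.1 g hg).1
  have e1 : ∀ (c d : ℂ) (X Y : QOp n), (c • X) * (d • Y) = (c * d) • (X * Y) := by
    intro c d X Y; rw [smul_mul_assoc, mul_smul_comm, smul_smul]
  have hval : ((g * g : (QOp n)ˣ) : QOp n)
      = (Complex.I ^ (s : ℕ) * Complex.I ^ (s : ℕ)) • 1 := by
    rw [Units.val_mul, hP, e1, pauliTensor_sq]
  have hpm : (Complex.I ^ (s : ℕ) * Complex.I ^ (s : ℕ)) = 1 ∨
      (Complex.I ^ (s : ℕ) * Complex.I ^ (s : ℕ)) = -1 := by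
    fin_cases s <;> norm_num [pow_succ, Complex.I_mul_I]
  rcases hpm with h | h
  · rw [h, one_smul] at hval
    exact Units.ext (by rw [hval, Units.val_one])
  · exfalso
    rw [h, neg_smul, one_smul] at hval
    have h2 : g * g = -1 := Units.ext (by rw [hval]; simp)
    exact hS.2.2 (h2 ▸ S.mul_mem hg hg)


/-- For stabilizer groups `M, S`, the quotients `M/(M ∩ S^⊥)` and `S/(S ∩ M^⊥)` are
commutative groups (all commutators lie in the subgroup quotiented by) of the same size,
where `G^⊥` is realized as the centralizer of `G`. -/
theorem quotients_commutative_same_size (n : ℕ) (M S : Subgroup (QOp n)ˣ)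
    (hM : IsStabilizerGroup M) (hS : IsStabilizerGroup S) :
    (∀ g ∈ M, ∀ h ∈ M, g * h * g⁻¹ * h⁻¹ ∈ Subgroup.centralizer (S : Set (QOp n)ˣ)) ∧
    (∀ g ∈ S, ∀ h ∈ S, g * h * g⁻¹ * h⁻¹ ∈ Subgroup.centralizer (M : Set (QOp n)ˣ)) ∧
    (Subgroup.centralizer (S : Set (QOp n)ˣ)).relIndex M
      = (Subgroup.centralizer (M : Set (QOp n)ˣ)).relIndex S := by
  obtain ⟨hMp, hMc, hMn⟩ := hM
  obtain ⟨hSp, hSc, hSn⟩ := hS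
  refine ⟨?_, ?_, ?_⟩
  · intro g hg h hh
    have h1 : g * h * g⁻¹ * h⁻¹ = 1 := by rw [hMc g hg h hh]; group
    rw [h1]; exact Subgroup.one_mem _
  · intro g hg h hh
    have h1 : g * h * g⁻¹ * h⁻¹ = 1 := by rw [hSc g hg h hh]; group
    rw [h1]; exact Subgroup.one_mem _
  · haveI : Finite M := stab_fin M ⟨hMp, hMc, hMn⟩
    haveI : Finite S := stab_fin S ⟨hSp, hSc, hSn⟩
    letI : Fintype M := Fintype.ofFinite _
    letI : Fintype S := Fintype.ofFinite _
    letI : Fact (Nat.Prime 2) := ⟨Nat.prime_two⟩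
    set f : M → (S → ZMod 2) := fun m s => commBitU (m : (QOp n)ˣ) (s : (QOp n)ˣ) with hf
    set gS : S → (M → ZMod 2) := fun s m => commBitU (s : (QOp n)ˣ) (m : (QOp n)ˣ) with hgS
    have hf_mul : ∀ m₁ m₂ : M, f (m₁ * m₂) = f m₁ + f m₂ := by
      intro m₁ m₂; funext s
      exact commBitU_mul_left (hMp _ m₁.2).1 (hMp _ m₂.2).1 (hSp _ s.2).1
    have hg_mul : ∀ s₁ s₂ : S, gS (s₁ * s₂) = gS s₁ + gS s₂ := by
      intro s₁ s₂; funext m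
      exact commBitU_mul_left (hSp _ s₁.2).1 (hSp _ s₂.2).1 (hMp _ m.2).1
    have hf_one : f 1 = 0 := by funext s; exact commBitU_one_left _
    have hg_one : gS 1 = 0 := by funext m; exact commBitU_one_left _
    let fM : M →* Multiplicative (S → ZMod 2) :=
      { toFun := fun m => Multiplicative.ofAdd (f m)
        map_one' := by show Multiplicative.ofAdd (f 1) = 1; rw [hf_one]; rfl
        map_mul' := by
          intro a b
          show Multiplicative.ofAdd (f (a * b))
            = Multiplicative.ofAdd (f a) * Multiplicative.ofAdd (f b)
          rw [hf_mul a b]; rfl }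
    let fS : S →* Multiplicative (M → ZMod 2) :=
      { toFun := fun s => Multiplicative.ofAdd (gS s)
        map_one' := by show Multiplicative.ofAdd (gS 1) = 1; rw [hg_one]; rfl
        map_mul' := by
          intro a b
          show Multiplicative.ofAdd (gS (a * b))
            = Multiplicative.ofAdd (gS a) * Multiplicative.ofAdd (gS b)
          rw [hg_mul a b]; rfl }
    have hkerM : fM.ker = (Subgroup.centralizer (S : Set (QOp n)ˣ)).subgroupOf M := by
      ext m
      rw [MonoidHom.mem_ker, Subgroup.mem_subgroupOf, Subgroup.mem_centralizer_iff]
      have h0 : (fM m = 1) ↔ f m = 0 := by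
        constructor
        · intro h; exact h
        · intro h; exact congrArg Multiplicative.ofAdd h
      rw [h0, funext_iff]
      constructor
      · intro h x hx
        exact ((commBitU_eq_zero_iff _ _).mp (h ⟨x, hx⟩)).symm
      · intro h s
        exact (commBitU_eq_zero_iff _ _).mpr ((h ↑s s.2).symm)
    have hkerS : fS.ker = (Subgroup.centralizer (M : Set (QOp n)ˣ)).subgroupOf S := by
      ext s
      rw [MonoidHom.mem_ker, Subgroup.mem_subgroupOf, Subgroup.mem_centralizer_iff]
      have h0 : (fS s = 1) ↔ gS s = 0 := by
        constructor
        · intro h; exact h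
        · intro h; exact congrArg Multiplicative.ofAdd h
      rw [h0, funext_iff]
      constructor
      · intro h x hx
        exact ((commBitU_eq_zero_iff _ _).mp (h ⟨x, hx⟩)).symm
      · intro h m
        exact (commBitU_eq_zero_iff _ _).mpr ((h ↑m m.2).symm)
    have hrel1 : (Subgroup.centralizer (S : Set (QOp n)ˣ)).relIndex M = Nat.card (Set.range f) := by
      rw [Subgroup.relIndex, ← hkerM, Subgroup.index_ker]
      have hset : (fM.range : Set (Multiplicative (S → ZMod 2)))
          = Multiplicative.ofAdd '' (Set.range f) := by
        ext x
        constructor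
        · rintro ⟨m, rfl⟩; exact ⟨f m, ⟨m, rfl⟩, rfl⟩
        · rintro ⟨y, ⟨m, rfl⟩, rfl⟩; exact ⟨m, rfl⟩
      have e2 : Nat.card fM.range
          = Nat.card (Multiplicative.ofAdd '' (Set.range f) : Set _) :=
        Nat.card_congr (Equiv.setCongr hset)
      rw [e2, Nat.card_image_of_injective Multiplicative.ofAdd.injective]
    have hrel2 : (Subgroup.centralizer (M : Set (QOp n)ˣ)).relIndex S = Nat.card (Set.range gS) := by
      rw [Subgroup.relIndex, ← hkerS, Subgroup.index_ker]
      have hset : (fS.range : Set (Multiplicative (M → ZMod 2)))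
          = Multiplicative.ofAdd '' (Set.range gS) := by
        ext x
        constructor
        · rintro ⟨s, rfl⟩; exact ⟨gS s, ⟨s, rfl⟩, rfl⟩
        · rintro ⟨y, ⟨s, rfl⟩, rfl⟩; exact ⟨s, rfl⟩
      have e2 : Nat.card fS.range
          = Nat.card (Multiplicative.ofAdd '' (Set.range gS) : Set _) :=
        Nat.card_congr (Equiv.setCongr hset)
      rw [e2, Nat.card_image_of_injective Multiplicative.ofAdd.injective]
    set A : Matrix M S (ZMod 2) := Matrix.of (fun m s => f m s) with hA
    have hz2 : ∀ c : ZMod 2, c = 0 ∨ c = 1 := by decide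
    have hrangef : Set.range f
        = (LinearMap.range (Matrix.vecMulLinear A) : Submodule (ZMod 2) (S → ZMod 2)) := by
      apply Set.Subset.antisymm
      · rintro x ⟨m, rfl⟩
        refine ⟨Pi.single m 1, ?_⟩
        funext s
        simp [Matrix.vecMulLinear_apply, Matrix.vecMul, dotProduct,
          Pi.single_apply, hA, Finset.sum_ite_eq]
      · rintro x ⟨v, rfl⟩
        have hexp : Matrix.vecMulLinear A v = ∑ m : M, v m • f m := by
          funext s
          simp [Matrix.vecMulLinear_apply, Matrix.vecMul, dotProduct,
            Finset.sum_apply, hA]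
        let N : AddSubmonoid (S → ZMod 2) :=
          { carrier := Set.range f
            zero_mem' := ⟨1, hf_one⟩
            add_mem' := by rintro _ _ ⟨a, rfl⟩ ⟨b, rfl⟩; exact ⟨a * b, hf_mul a b⟩ }
        have : Matrix.vecMulLinear A v ∈ N := by
          rw [hexp]
          refine AddSubmonoid.sum_mem N ?_
          intro m _
          rcases hz2 (v m) with h | h
          · rw [h, zero_smul]; exact N.zero_mem
          · rw [h, one_smul]; exact ⟨m, rfl⟩
        exact this
    have hrangeg : Set.range gS
        = (LinearMap.range (Matrix.mulVecLin A) : Submodule (ZMod 2) (M → ZMod 2)) := by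
      have hAg : ∀ (m : M) (s : S), A m s = gS s m := by
        intro m s; simp [hA, hf, hgS, commBitU_symm]
      apply Set.Subset.antisymm
      · rintro x ⟨s, rfl⟩
        refine ⟨Pi.single s 1, ?_⟩
        funext m
        simp [Matrix.mulVecLin_apply, Matrix.mulVec, dotProduct,
          Pi.single_apply, hAg, Finset.sum_ite_eq]
      · rintro x ⟨v, rfl⟩
        have hexp : Matrix.mulVecLin A v = ∑ s : S, v s • gS s := by
          funext m
          simp only [Matrix.mulVecLin_apply, Matrix.mulVec, dotProduct,
            Finset.sum_apply, Pi.smul_apply, smul_eq_mul]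
          exact Finset.sum_congr rfl fun s _ => by simp only [hAg]; exact mul_comm _ _
        let N : AddSubmonoid (M → ZMod 2) :=
          { carrier := Set.range gS
            zero_mem' := ⟨1, hg_one⟩
            add_mem' := by rintro _ _ ⟨a, rfl⟩ ⟨b, rfl⟩; exact ⟨a * b, hg_mul a b⟩ }
        have : Matrix.mulVecLin A v ∈ N := by
          rw [hexp]
          refine AddSubmonoid.sum_mem N ?_
          intro s _
          rcases hz2 (v s) with h | h
          · rw [h, zero_smul]; exact N.zero_mem
          · rw [h, one_smul]; exact ⟨s, rfl⟩
        exact this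
    have hfr : Module.finrank (ZMod 2) (LinearMap.range (Matrix.vecMulLinear A))
        = Module.finrank (ZMod 2) (LinearMap.range (Matrix.mulVecLin A)) := by
      rw [← Matrix.mulVecLin_transpose]
      have := Matrix.rank_transpose A
      simpa [Matrix.rank] using this
    have hcard : Nat.card (LinearMap.range (Matrix.vecMulLinear A))
        = Nat.card (LinearMap.range (Matrix.mulVecLin A)) := by
      obtain ⟨e⟩ := FiniteDimensional.nonempty_linearEquiv_of_finrank_eq hfr
      exact Nat.card_congr e.toEquiv
    rw [hrel1, hrel2, hrangef, hrangeg]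
    exact hcard
end
end

section
/- Let M and S be two stabilizer groups on n qubits. The map sending cosets ḡ ∈ M/(M ∩ S^⊥) and h̄ ∈ S/(S ∩ M^⊥) to [g, h] ∈ F_2 for any representatives g, h is well-defined and non-degenerate: if [ḡ, h̄] = 0 for all ḡ then h̄ is the trivial coset, and symmetrically for ḡ. -/
open Matrix
open scoped Classical

noncomputable section

/-- The commutator-bit pairing between cosets of `M/(M ∩ S^⊥)` and `S/(S ∩ M^⊥)` is
well-defined (independent of the chosen representatives) and non-degenerate. -/
theorem coset_pairing_wellDefined_nondegenerate (n : ℕ) (M S : Subgroup (QOp n)ˣ)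
    (hM : IsStabilizerGroup M) (hS : IsStabilizerGroup S) :
    (∀ g ∈ M, ∀ g' ∈ M, ∀ h ∈ S, ∀ h' ∈ S,
        g⁻¹ * g' ∈ Subgroup.centralizer (S : Set (QOp n)ˣ) →
        h⁻¹ * h' ∈ Subgroup.centralizer (M : Set (QOp n)ˣ) →
        commBitU g h = commBitU g' h') ∧
    (∀ h ∈ S, (∀ g ∈ M, commBitU g h = 0) →
        h ∈ S ⊓ Subgroup.centralizer (M : Set (QOp n)ˣ)) ∧
    (∀ g ∈ M, (∀ h ∈ S, commBitU g h = 0) →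
        g ∈ M ⊓ Subgroup.centralizer (S : Set (QOp n)ˣ)) := by

  refine ⟨?_, ?_, ?_⟩
  · intro g hg g' hg' h hh h' hh' hc hd
    set c := g⁻¹ * g' with hc_def
    set d := h⁻¹ * h' with hd_def
    have hcM : c ∈ M := M.mul_mem (M.inv_mem hg) hg'
    have hdS : d ∈ S := S.mul_mem (S.inv_mem hh) hh'
    have hch : c * h = h * c := (Subgroup.mem_centralizer_iff.mp hc h hh).symm
    have hdg : d * g = g * d := (Subgroup.mem_centralizer_iff.mp hd g hg).symm
    have hdc : d * c = c * d := (Subgroup.mem_centralizer_iff.mp hd c hcM).symm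
    have hg'e : g' = g * c := by rw [hc_def, ← mul_assoc, mul_inv_cancel, one_mul]
    have hh'e : h' = h * d := by rw [hd_def, ← mul_assoc, mul_inv_cancel, one_mul]
    have key1 : g' * h' = (g * h) * (c * d) := by
      rw [hg'e, hh'e]
      calc g * c * (h * d) = g * (c * h) * d := by group
        _ = g * (h * c) * d := by rw [hch]
        _ = (g * h) * (c * d) := by group
    have key2 : h' * g' = (h * g) * (c * d) := by
      rw [hg'e, hh'e]
      calc h * d * (g * c) = h * (d * g) * c := by group
        _ = h * (g * d) * c := by rw [hdg]
        _ = h * g * (d * c) := by group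
        _ = (h * g) * (c * d) := by rw [hdc]
    have hiff : g * h = h * g ↔ g' * h' = h' * g' := by
      rw [key1, key2]
      exact ⟨fun e => by rw [e], fun e => mul_right_cancel e⟩
    unfold commBitU
    by_cases hcomm : g * h = h * g
    · rw [if_pos hcomm, if_pos (hiff.mp hcomm)]
    · rw [if_neg hcomm, if_neg (fun e => hcomm (hiff.mpr e))]
  · intro h hh hall
    refine ⟨hh, Subgroup.mem_centralizer_iff.mpr fun g hg => ?_⟩
    have := hall g hg
    unfold commBitU at this
    by_contra hne
    rw [if_neg hne] at this
    exact one_ne_zero this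
  · intro g hg hall
    refine ⟨hg, Subgroup.mem_centralizer_iff.mpr fun h hh => ?_⟩
    have := hall h hh
    unfold commBitU at this
    by_contra hne
    rw [if_neg (fun e : g * h = h * g => hne e.symm)] at this
    exact one_ne_zero this
end
end

section
/- Let A be an m×n matrix over F_2 of full row rank m. Then there exist an n×n invertible matrix R in (n−m, m)-split reduced echelon form and an m×m invertible matrix F such that AR = (0_{m×(n−m)} | F). -/
open Matrix

/-- `A` has a leading (pivot) entry in row `i` at column `j`. -/
def IsLead {p q : ℕ} (A : Matrix (Fin p) (Fin q) (ZMod 2)) (i : Fin p) (j : Fin q) : Prop :=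
  A i j ≠ 0 ∧ ∀ j' < j, A i j' = 0

/-- `A` is in row echelon form: the leading entry of each nonzero row lies strictly to the
right of the leading entry of every earlier row (in particular, zero rows are at the bottom). -/
def IsRowEchelon {p q : ℕ} (A : Matrix (Fin p) (Fin q) (ZMod 2)) : Prop :=
  ∀ i₁ i₂ : Fin p, i₁ < i₂ → ∀ j₂ : Fin q, IsLead A i₂ j₂ → ∃ j₁ < j₂, IsLead A i₁ j₁

/-- `A` is in reduced row echelon form: row echelon form and each pivot column has a single
nonzero entry. -/
def IsRREF {p q : ℕ} (A : Matrix (Fin p) (Fin q) (ZMod 2)) : Prop :=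
  _root_.IsRowEchelon A ∧ ∀ i j, IsLead A i j → ∀ i' ≠ i, A i' j = 0

/-- The left part `Mᵀ_{[n_r]}` of `M`: the transpose of its first `n_r` columns. -/
def leftPart {m n_r n_m : ℕ} (M : Matrix (Fin m) (Fin (n_r + n_m)) (ZMod 2)) :
    Matrix (Fin n_r) (Fin m) (ZMod 2) :=
  Matrix.of fun j i => M i (Fin.castAdd n_m j)

/-- The right part `Mᵀ_{[n_r+1, n_r+n_m]}` of `M`: the transpose of its last `n_m` columns. -/
def rightPart {m n_r n_m : ℕ} (M : Matrix (Fin m) (Fin (n_r + n_m)) (ZMod 2)) :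
    Matrix (Fin n_m) (Fin m) (ZMod 2) :=
  Matrix.of fun j i => M i (Fin.natAdd n_r j)

/-- `M` is in `(n_r, n_m)`-split echelon form: `M` has full column rank, its left part is in
reduced row echelon form, its right part is in row echelon form, and every row of `M` carrying
a leading one of the left part vanishes in the right part. -/
def InSplitEchelon {m : ℕ} (n_r n_m : ℕ) (M : Matrix (Fin m) (Fin (n_r + n_m)) (ZMod 2)) :
    Prop :=
  LinearIndependent (ZMod 2) (fun j : Fin (n_r + n_m) => (fun i => M i j : Fin m → ZMod 2)) ∧
  IsRREF (leftPart M) ∧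
  _root_.IsRowEchelon (rightPart M) ∧
  ∀ (l : Fin n_r) (i : Fin m), IsLead (leftPart M) l i → ∀ j : Fin n_m, rightPart M j i = 0

/-- `M` is in `(n_r, n_m)`-split reduced echelon form: split echelon form whose right part is
also in reduced row echelon form. -/
def InSplitReducedEchelon {m : ℕ} (n_r n_m : ℕ)
    (M : Matrix (Fin m) (Fin (n_r + n_m)) (ZMod 2)) : Prop :=
  InSplitEchelon n_r n_m M ∧ IsRREF (rightPart M)

open Module

/-- `v` has its leading (first nonzero) entry at `j`. -/
def VLead {n : ℕ} (v : Fin n → ZMod 2) (j : Fin n) : Prop :=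
  v j ≠ 0 ∧ ∀ j' < j, v j' = 0

lemma vlead_unique {n : ℕ} {v : Fin n → ZMod 2} {j j' : Fin n}
    (h : VLead v j) (h' : VLead v j') : j = j' := by
  rcases lt_trichotomy j j' with hlt | he | hgt
  · exact absurd (h'.2 j hlt) h.1
  · exact he
  · exact absurd (h.2 j' hgt) h'.1

lemma exists_vlead {n : ℕ} {v : Fin n → ZMod 2} (hv : v ≠ 0) : ∃ j, VLead v j := by
  classical
  have hne : (Finset.univ.filter fun j => v j ≠ 0).Nonempty := by
    by_contra h
    apply hv
    funext j
    by_contra hj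
    exact h ⟨j, Finset.mem_filter.2 ⟨Finset.mem_univ _, hj⟩⟩
  set S := Finset.univ.filter fun j => v j ≠ 0
  refine ⟨S.min' hne, (Finset.mem_filter.mp (S.min'_mem hne)).2, fun j' hj' => ?_⟩
  by_contra hj
  exact absurd (S.min'_le j' (Finset.mem_filter.2 ⟨Finset.mem_univ _, hj⟩)) (not_le.mpr hj')

open Classical in
/-- The set of lead positions of a subspace of `Fin n → ZMod 2`. -/
noncomputable def leadSet {n : ℕ} (W : Submodule (ZMod 2) (Fin n → ZMod 2)) : Finset (Fin n) :=
  Finset.univ.filter fun j => ∃ v ∈ W, VLead v j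

lemma mem_leadSet {n : ℕ} {W : Submodule (ZMod 2) (Fin n → ZMod 2)} {j : Fin n} :
    j ∈ leadSet W ↔ ∃ v ∈ W, VLead v j := by
  classical
  simp [leadSet]

lemma eq_zero_of_vanish_leadSet {n : ℕ} {W : Submodule (ZMod 2) (Fin n → ZMod 2)}
    {v : Fin n → ZMod 2} (hv : v ∈ W) (h : ∀ j ∈ leadSet W, v j = 0) : v = 0 := by
  by_contra hne
  obtain ⟨j, hj⟩ := exists_vlead hne
  exact hj.1 (h j (mem_leadSet.2 ⟨v, hv, hj⟩))

lemma leadSet_spec {n : ℕ} (W : Submodule (ZMod 2) (Fin n → ZMod 2)) :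
    (leadSet W).card = finrank (ZMod 2) W ∧
    ∃ v : leadSet W → (Fin n → ZMod 2),
      (∀ j, v j ∈ W) ∧ (∀ j, VLead (v j) (j : Fin n)) ∧
      (∀ j j' : leadSet W, v j (j' : Fin n) = if j' = j then 1 else 0) := by
  classical
  -- the evaluation map on lead coordinates
  set φ : W →ₗ[ZMod 2] (leadSet W → ZMod 2) :=
    { toFun := fun w j => (w : Fin n → ZMod 2) (j : Fin n)
      map_add' := fun a b => rfl
      map_smul' := fun c a => rfl } with hφ
  have hinj : Function.Injective φ := by
    rw [← LinearMap.ker_eq_bot, eq_bot_iff]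
    intro w hw
    have hw0 : (w : Fin n → ZMod 2) = 0 := by
      refine eq_zero_of_vanish_leadSet w.2 fun j hj => ?_
      exact congrFun (LinearMap.mem_ker.mp hw) ⟨j, hj⟩
    exact (Submodule.mem_bot _).mpr (Subtype.ext hw0)
  -- a family of vectors with prescribed leads
  have hwfam : ∀ j : leadSet W, ∃ w, w ∈ W ∧ VLead w (j : Fin n) := by
    intro j
    obtain ⟨w, hwW, hwL⟩ := mem_leadSet.mp j.2
    exact ⟨w, hwW, hwL⟩
  choose w hwW hwL using hwfam
  have hwind : LinearIndependent (ZMod 2) w := by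
    rw [Fintype.linearIndependent_iff]
    intro g hg
    by_contra h
    push_neg at h
    have hS : (Finset.univ.filter fun j => g j ≠ 0).Nonempty := by
      obtain ⟨j, hj⟩ := h
      exact ⟨j, Finset.mem_filter.2 ⟨Finset.mem_univ _, hj⟩⟩
    set S := Finset.univ.filter fun j => g j ≠ 0
    set j₀ := S.min' hS with hj₀
    have hgj₀ : g j₀ ≠ 0 := (Finset.mem_filter.mp (S.min'_mem hS)).2
    have := congrFun hg (j₀ : Fin n)
    rw [Finset.sum_apply] at this
    rw [Finset.sum_eq_single j₀] at this
    · simp only [Pi.smul_apply, smul_eq_mul, Pi.zero_apply] at this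
      exact hgj₀ (by
        rcases mul_eq_zero.mp this with h1 | h2
        · exact h1
        · exact absurd h2 (hwL j₀).1)
    · intro j _ hj
      by_cases hgj : g j = 0
      · simp [hgj]
      · have hjS : j ∈ S := Finset.mem_filter.2 ⟨Finset.mem_univ _, hgj⟩
        have hlt : (j₀ : Fin n) < (j : Fin n) := by
          have hle := S.min'_le j hjS
          exact lt_of_le_of_ne hle (fun h => hj (Subtype.ext h).symm)
        simp [(hwL j).2 _ hlt]
    · intro hj
      exact absurd (Finset.mem_univ j₀) hj
  have hcard : (leadSet W).card = finrank (ZMod 2) W := by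
    have h1 : finrank (ZMod 2) W ≤ (leadSet W).card := by
      have := LinearMap.finrank_le_finrank_of_injective hinj
      simpa [Module.finrank_fintype_fun_eq_card] using this
    have h2 : (leadSet W).card ≤ finrank (ZMod 2) W := by
      have hwind' : LinearIndependent (ZMod 2) fun j : leadSet W => (⟨w j, hwW j⟩ : W) := by
        refine hwind.of_comp W.subtype
      have := hwind'.fintype_card_le_finrank
      simpa using this
    omega
  refine ⟨hcard, ?_⟩
  have hsurj : Function.Surjective φ :=
    (LinearMap.injective_iff_surjective_of_finrank_eq_finrank
      (by simp [Module.finrank_fintype_fun_eq_card, hcard])).mp hinj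
  have hv : ∀ j : leadSet W, ∃ u : W, φ u = Pi.single j 1 := fun j => hsurj _
  choose u hu using hv
  refine ⟨fun j => (u j : Fin n → ZMod 2), fun j => (u j).2, ?_, ?_⟩
  · -- leads
    intro j
    have hval : ∀ j' : leadSet W, (u j : Fin n → ZMod 2) (j' : Fin n) = if j' = j then 1 else 0 := by
      intro j'
      have := congrFun (hu j) j'
      simp only [Pi.single_apply] at this
      exact this
    have hne : (u j : Fin n → ZMod 2) ≠ 0 := by
      intro h0
      have := hval j
      rw [h0] at this
      simp at this
    obtain ⟨lj, hlj⟩ := exists_vlead hne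
    have hljL : lj ∈ leadSet W := mem_leadSet.2 ⟨_, (u j).2, hlj⟩
    have : (⟨lj, hljL⟩ : leadSet W) = j := by
      by_contra hc
      have := hval ⟨lj, hljL⟩
      rw [if_neg hc] at this
      exact hlj.1 this
    rwa [show (j : Fin n) = lj from by rw [← this]]
  · intro j j'
    have := congrFun (hu j) j'
    simp only [Pi.single_apply] at this
    exact this

/-- Block reshape: for any `m × (k+m)` matrix `A` over `F₂` of full row rank `m`, there exist
an invertible `(k+m)×(k+m)` matrix `R` in `(k, m)`-split reduced echelon form and an invertible
`m×m` matrix `F` with `A * R = (0_{m×k} | F)`. -/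
theorem block_reshape (m k : ℕ) (A : Matrix (Fin m) (Fin (k + m)) (ZMod 2))
    (hA : LinearIndependent (ZMod 2)
      (fun i : Fin m => (fun j => A i j : Fin (k + m) → ZMod 2))) :
    ∃ R : Matrix (Fin (k + m)) (Fin (k + m)) (ZMod 2),
      IsUnit R ∧ InSplitReducedEchelon k m R ∧
      ∃ F : Matrix (Fin m) (Fin m) (ZMod 2), IsUnit F ∧
        (∀ (i : Fin m) (j : Fin k), (A * R) i (Fin.castAdd m j) = 0) ∧
        (∀ i j : Fin m, (A * R) i (Fin.natAdd k j) = F i j) := by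
  classical
  have hrank : A.rank = m := by simpa using hA.rank_matrix
  have hker : finrank (ZMod 2) (LinearMap.ker A.mulVecLin) = k := by
    have h1 := LinearMap.finrank_range_add_finrank_ker A.mulVecLin
    rw [Module.finrank_fintype_fun_eq_card, Fintype.card_fin] at h1
    have h2 : finrank (ZMod 2) (LinearMap.range A.mulVecLin) = m := hrank
    omega
  have hcardL : (leadSet (LinearMap.ker A.mulVecLin)).card = k :=
    (leadSet_spec (LinearMap.ker A.mulVecLin)).1.trans hker
  obtain ⟨-, v, hv1, hv2, hv3⟩ := leadSet_spec (LinearMap.ker A.mulVecLin)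
  have hcardC : ((leadSet (LinearMap.ker A.mulVecLin))ᶜ).card = m := by
    rw [Finset.card_compl, hcardL, Fintype.card_fin]
    omega
  set l := (leadSet (LinearMap.ker A.mulVecLin)).orderIsoOfFin hcardL with hl
  set q := ((leadSet (LinearMap.ker A.mulVecLin))ᶜ).orderIsoOfFin hcardC with hq
  have hlq : ∀ (t : Fin k) (j : Fin m), ((l t : Fin (k + m))) ≠ ((q j : Fin (k + m))) := by
    intro t j h
    exact (Finset.mem_compl.mp (q j).2) (h ▸ (l t).2)
  obtain ⟨R, hRl, hRr⟩ :
      ∃ R : Matrix (Fin (k + m)) (Fin (k + m)) (ZMod 2),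
        (∀ i t, R i (Fin.castAdd m t) = v (l t) i) ∧
        (∀ i j, R i (Fin.natAdd k j) = if i = ((q j : Fin (k + m))) then 1 else 0) :=
    ⟨Matrix.of fun i x => Fin.addCases (fun t => v (l t) i)
        (fun j => if i = ((q j : Fin (k + m))) then 1 else 0) x,
      fun i t => by simp, fun i j => by simp⟩
  have hvLL : ∀ t t' : Fin k, v (l t) ((l t' : Fin (k + m))) = if t' = t then 1 else 0 := by
    intro t t'
    rw [hv3]
    simp [l.injective.eq_iff]
  have hvker : ∀ t, A.mulVec (v (l t)) = 0 := fun t => by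
    simpa using LinearMap.mem_ker.mp (hv1 (l t))
  -- key evaluation formulas for R.mulVec
  have key1 : ∀ (y : Fin (k + m) → ZMod 2) (t₀ : Fin k),
      R.mulVec y ((l t₀ : Fin (k + m))) = y (Fin.castAdd m t₀) := by
    intro y t₀
    have hs : R.mulVec y ((l t₀ : Fin (k + m))) =
        ∑ x, R ((l t₀ : Fin (k + m))) x * y x := by
      simp [Matrix.mulVec, dotProduct]
    rw [hs, Fin.sum_univ_add]
    have e1 : ∑ t, R ((l t₀ : Fin (k + m))) (Fin.castAdd m t) * y (Fin.castAdd m t)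
        = y (Fin.castAdd m t₀) := by
      rw [Finset.sum_eq_single t₀]
      · rw [hRl, hvLL, if_pos rfl, one_mul]
      · intro t _ ht
        rw [hRl, hvLL, if_neg (fun h => ht h.symm), zero_mul]
      · intro h; exact absurd (Finset.mem_univ _) h
    have e2 : ∑ j, R ((l t₀ : Fin (k + m))) (Fin.natAdd k j) * y (Fin.natAdd k j) = 0 :=
      Finset.sum_eq_zero fun j _ => by rw [hRr, if_neg (hlq t₀ j), zero_mul]
    rw [e1, e2, add_zero]
  have key2 : ∀ (y : Fin (k + m) → ZMod 2) (j₀ : Fin m),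
      R.mulVec y ((q j₀ : Fin (k + m))) =
        (∑ t, v (l t) ((q j₀ : Fin (k + m))) * y (Fin.castAdd m t)) + y (Fin.natAdd k j₀) := by
    intro y j₀
    have hs : R.mulVec y ((q j₀ : Fin (k + m))) =
        ∑ x, R ((q j₀ : Fin (k + m))) x * y x := by
      simp [Matrix.mulVec, dotProduct]
    rw [hs, Fin.sum_univ_add]
    congr 1
    · exact Finset.sum_congr rfl fun t _ => by rw [hRl]
    · rw [Finset.sum_eq_single j₀]
      · rw [hRr, if_pos rfl, one_mul]
      · intro j _ hj
        rw [hRr, if_neg (fun h => hj (q.injective (Subtype.ext h)).symm), zero_mul]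
      · intro h; exact absurd (Finset.mem_univ _) h
  
  -- R.mulVec injective, hence R invertible
  have hR0 : ∀ y, R.mulVec y = 0 → y = 0 := by
    intro y hy
    have h1 : ∀ t, y (Fin.castAdd m t) = 0 := fun t => by
      rw [← key1 y t, hy, Pi.zero_apply]
    have h2 : ∀ j, y (Fin.natAdd k j) = 0 := by
      intro j
      have h := key2 y j
      rw [hy] at h
      simp only [Pi.zero_apply] at h
      rw [Finset.sum_eq_zero (fun t _ => by rw [h1, mul_zero]), zero_add] at h
      exact h.symm
    funext x
    exact Fin.addCases h1 h2 x
  have hRinj : Function.Injective R.mulVec := by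
    intro y1 y2 h
    have h0 := hR0 (y1 - y2) (by rw [Matrix.mulVec_sub, h, sub_self])
    exact sub_eq_zero.mp h0
  have hRunit : IsUnit R := mulVec_injective_iff_isUnit.mp hRinj
  have hleft : ∀ t i, leftPart R t i = v (l t) i := fun t i => hRl i t
  have hright : ∀ j i, rightPart R j i = if i = ((q j : Fin (k + m))) then 1 else 0 :=
    fun j i => hRr i j
  have hLlead : ∀ t, IsLead (leftPart R) t ((l t : Fin (k + m))) := by
    intro t
    refine ⟨?_, ?_⟩
    · rw [hleft]; exact (hv2 (l t)).1
    · intro j' hj'; rw [hleft]; exact (hv2 (l t)).2 j' hj'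
  have hLlead_eq : ∀ t x, IsLead (leftPart R) t x → x = ((l t : Fin (k + m))) := by
    intro t x hx
    refine vlead_unique ⟨?_, ?_⟩ (hv2 (l t))
    · rw [← hleft]; exact hx.1
    · intro j' hj'; rw [← hleft]; exact hx.2 j' hj'
  have hLRREF : IsRREF (leftPart R) := by
    refine ⟨?_, ?_⟩
    · intro t₁ t₂ hlt x₂ hx₂
      refine ⟨((l t₁ : Fin (k + m))), ?_, hLlead t₁⟩
      rw [hLlead_eq t₂ x₂ hx₂]
      exact_mod_cast l.strictMono hlt
    · intro t x hx t' hne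
      rw [hLlead_eq t x hx, hleft, hvLL, if_neg (fun h => hne h.symm)]
  have hRlead : ∀ j, IsLead (rightPart R) j ((q j : Fin (k + m))) := by
    intro j
    refine ⟨?_, ?_⟩
    · rw [hright, if_pos rfl]; exact one_ne_zero
    · intro i hi; rw [hright, if_neg (ne_of_lt hi)]
  have hRlead_eq : ∀ j x, IsLead (rightPart R) j x → x = ((q j : Fin (k + m))) := by
    intro j x hx
    by_contra hc
    exact hx.1 (by rw [hright, if_neg hc])
  have hRRREF : IsRREF (rightPart R) := by
    refine ⟨?_, ?_⟩
    · intro j₁ j₂ hlt x₂ hx₂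
      refine ⟨((q j₁ : Fin (k + m))), ?_, hRlead j₁⟩
      rw [hRlead_eq j₂ x₂ hx₂]
      exact_mod_cast q.strictMono hlt
    · intro j x hx j' hne
      rw [hRlead_eq j x hx, hright,
        if_neg (fun h => hne (q.injective (Subtype.ext h)).symm)]
  have hcross : ∀ (t : Fin k) (i : Fin (k + m)), IsLead (leftPart R) t i →
      ∀ j : Fin m, rightPart R j i = 0 := by
    intro t i hi j
    rw [hLlead_eq t i hi, hright, if_neg (hlq t j)]
  have hcols : LinearIndependent (ZMod 2)
      (fun x : Fin (k + m) => (fun i => R i x : Fin (k + m) → ZMod 2)) :=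
    linearIndependent_cols_iff_isUnit.mpr hRunit
  have hAR_left : ∀ (i : Fin m) (t : Fin k), (A * R) i (Fin.castAdd m t) = 0 := by
    intro i t
    rw [Matrix.mul_apply]
    rw [Finset.sum_congr rfl fun x _ => by rw [hRl]]
    have h := congrFun (hvker t) i
    simpa [Matrix.mulVec, dotProduct] using h
  have hAR_right : ∀ (i : Fin m) (j : Fin m),
      (A * R) i (Fin.natAdd k j) = A i ((q j : Fin (k + m))) := by
    intro i j
    rw [Matrix.mul_apply]
    have h : ∀ x, A i x * R x (Fin.natAdd k j) =
        if x = ((q j : Fin (k + m))) then A i x else 0 := by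
      intro x
      rw [hRr]
      split <;> simp
    rw [Finset.sum_congr rfl fun x _ => h x,
      Finset.sum_ite_eq' Finset.univ ((q j : Fin (k + m))) (A i), if_pos (Finset.mem_univ _)]
  set F : Matrix (Fin m) (Fin m) (ZMod 2) :=
    Matrix.of fun i j => A i ((q j : Fin (k + m))) with hF
  have hF0 : ∀ x : Fin m → ZMod 2, F.mulVec x = 0 → x = 0 := by
    intro x hx
    obtain ⟨y, hyl, hyr⟩ : ∃ y : Fin (k + m) → ZMod 2,
        (∀ t, y (Fin.castAdd m t) = 0) ∧ (∀ j, y (Fin.natAdd k j) = x j) :=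
      ⟨Fin.addCases (fun _ => 0) x, fun t => by simp, fun j => by simp⟩
    have hz : A.mulVec (R.mulVec y) = 0 := by
      rw [Matrix.mulVec_mulVec]
      funext i
      have hs : (A * R).mulVec y i = ∑ c, (A * R) i c * y c := by
        simp [Matrix.mulVec, dotProduct]
      rw [hs, Fin.sum_univ_add]
      have e1 : ∑ t, (A * R) i (Fin.castAdd m t) * y (Fin.castAdd m t) = 0 :=
        Finset.sum_eq_zero fun t _ => by rw [hyl, mul_zero]
      have e2 : ∑ j, (A * R) i (Fin.natAdd k j) * y (Fin.natAdd k j) = F.mulVec x i := by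
        have hs2 : F.mulVec x i = ∑ j, F i j * x j := by
          simp [Matrix.mulVec, dotProduct]
        rw [hs2]
        exact Finset.sum_congr rfl fun j _ => by rw [hAR_right, hyr]; rfl
      rw [e1, e2, hx, zero_add, Pi.zero_apply]
    have hzW : R.mulVec y ∈ LinearMap.ker A.mulVecLin := by
      rw [LinearMap.mem_ker]
      simpa using hz
    have hz0 : R.mulVec y = 0 := by
      refine eq_zero_of_vanish_leadSet hzW fun c hc => ?_
      obtain ⟨t, ht⟩ : ∃ t, ((l t : Fin (k + m))) = c := ⟨l.symm ⟨c, hc⟩, by simp⟩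
      rw [← ht, key1, hyl]
    funext j
    have h := congrFun hz0 ((q j : Fin (k + m)))
    rw [key2] at h
    rw [Finset.sum_eq_zero (fun t _ => by rw [hyl, mul_zero]), zero_add, hyr] at h
    simpa using h
  have hFinj : Function.Injective F.mulVec := by
    intro x1 x2 h
    have h0 := hF0 (x1 - x2) (by rw [Matrix.mulVec_sub, h, sub_self])
    exact sub_eq_zero.mp h0
  have hFunit : IsUnit F := mulVec_injective_iff_isUnit.mp hFinj
  exact ⟨R, hRunit, ⟨⟨hcols, hLRREF, hRRREF.1, hcross⟩, hRRREF⟩, F, hFunit,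
    fun i t => hAR_left i t, fun i j => hAR_right i j⟩
end
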